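/- arXiv:1307.5482 — 2 statements merged into one kernel-verified Lean document; each statement's English description precedes it below -/
import Mathlib

section
/- Let C₁ = K(x₁, r₁), C₂ = K(x₂, r₂), C₃ = K(x₃, r₃) be circles with rᵢ > 0 such that each pair crosses in two points, i.e. |rᵢ − rⱼ| < ‖xᵢ − xⱼ‖ < rᵢ + rⱼ for all i ≠ j, and such that the three circles have exactly one common point: C₁ ∩ C₂ ∩ C₃ = {p} for some p ∈ ℝ². Then the Apollonius problem for (C₁, C₂, C₃) has exactly 5 solutions. -/
set_option maxHeartbeats 1000000


open RealInnerProductSpace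

noncomputable section

/-- The Euclidean plane. -/
abbrev Pl := EuclideanSpace ℝ (Fin 2)

/-- The circle of center `x` and radius `r` in the Euclidean plane. -/
def K (x : Pl) (r : ℝ) : Set Pl := {p | dist p x = r}

/-- Two circles, given by centers and (positive) radii, are tangent. -/
def CircleTangent (y : Pl) (s : ℝ) (x : Pl) (r : ℝ) : Prop :=
  dist y x = s + r ∨ dist y x = |s - r|

/-- A line (a 1-dimensional affine subspace of the plane) is tangent to a circle iff it
meets it in exactly one point. -/
def LineTangent (L : AffineSubspace ℝ Pl) (x : Pl) (r : ℝ) : Prop :=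
  ∃! p, p ∈ (L : Set Pl) ∩ K x r

/-- Solutions of the Apollonius problem for three circles with centers `x i` and radii
`r i`: a solution is either a circle `(y, s)` with `s > 0` tangent to all three, or a
line (1-dimensional affine subspace) tangent to all three, or a point lying on all
three. The solution set is the disjoint union (sum type) of these three sets. -/
def ApolloniusSolutions (x : Fin 3 → Pl) (r : Fin 3 → ℝ) : Type :=
  {ys : Pl × ℝ // 0 < ys.2 ∧ ∀ i, CircleTangent ys.1 ys.2 (x i) (r i)} ⊕
  {L : AffineSubspace ℝ Pl // Module.finrank ℝ L.direction = 1 ∧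
    ∀ i, LineTangent L (x i) (r i)} ⊕
  {p : Pl // ∀ i, p ∈ K (x i) (r i)}



-- ### Auxiliary machinery ###

lemma uniq_zero (v w z : Pl) (hind : ∀ a b : ℝ, a•v + b•w = 0 → a = 0 ∧ b = 0)
    (h1 : ⟪v,z⟫ = 0) (h2 : ⟪w,z⟫ = 0) : z = 0 := by
  by_contra hz
  have hli : LinearIndependent ℝ ![v,w,z] := by
    rw [Fintype.linearIndependent_iff]
    intro g hg
    rw [Fin.sum_univ_three] at hg
    simp only [Matrix.cons_val_zero, Matrix.cons_val_one, Matrix.head_cons,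
      Matrix.cons_val_two, Matrix.tail_cons] at hg
    have hz2 : g 2 = 0 := by
      have := congrArg (fun q => ⟪q, z⟫) hg
      simp only [inner_add_left, real_inner_smul_left, h1, h2, inner_zero_left,
        real_inner_self_eq_norm_sq] at this
      have hnz : ‖z‖ ≠ 0 := by simpa using hz
      have : g 2 * ‖z‖^2 = 0 := by linarith
      rcases mul_eq_zero.mp this with h | h
      · exact h
      · exact absurd (pow_eq_zero_iff (by norm_num) |>.mp h) hnz
    rw [hz2, zero_smul, add_zero] at hg
    have := hind _ _ hg
    intro i; fin_cases i <;> simp [this.1, this.2, hz2]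
  have := hli.fintype_card_le_finrank
  simp at this

lemma inner_self_ne (w : Pl) (hw : w ≠ 0) : ⟪w,w⟫ ≠ 0 :=
  fun h => hw ((@inner_self_eq_zero ℝ _ _ _ _ w).mp h)

lemma perp_indep (w u : Pl) (hw : w ≠ 0) (hu : u ≠ 0) (h : ⟪w,u⟫ = 0) :
    ∀ a b : ℝ, a•w + b•u = 0 → a = 0 ∧ b = 0 := by
  intro a b hab
  have h' : ⟪u,w⟫ = 0 := by rw [real_inner_comm]; exact h
  have e1 := congrArg (fun q => ⟪w, q⟫) hab
  have e2 := congrArg (fun q => ⟪u, q⟫) hab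
  simp only [inner_add_right, real_inner_smul_right, h, h', inner_zero_right] at e1 e2
  constructor
  · have : a * ⟪w,w⟫ = 0 := by linarith
    exact (mul_eq_zero.mp this).resolve_right (inner_self_ne w hw)
  · have : b * ⟪u,u⟫ = 0 := by linarith
    exact (mul_eq_zero.mp this).resolve_right (inner_self_ne u hu)

lemma exists_unit_perp (w : Pl) (hw : w ≠ 0) : ∃ u : Pl, ‖u‖ = 1 ∧ ⟪w,u⟫ = 0 := by
  have hrk : Module.finrank ℝ ((Submodule.span ℝ {w})ᗮ : Submodule ℝ Pl) = 1 := by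
    have h1 := Submodule.finrank_add_finrank_orthogonal (𝕜 := ℝ) (Submodule.span ℝ {w})
    rw [finrank_span_singleton hw] at h1
    have h2 : Module.finrank ℝ Pl = 2 := by simp
    omega
  obtain ⟨⟨u0, hu0mem⟩, hu0ne, -⟩ := finrank_eq_one_iff'.mp hrk
  have hu0 : u0 ≠ 0 := by simpa [Submodule.mk_eq_zero] using hu0ne
  refine ⟨‖u0‖⁻¹ • u0, ?_, ?_⟩
  · rw [norm_smul]; simp [norm_ne_zero_iff.mpr hu0]
  · have h0 : ⟪u0, w⟫ = 0 := Submodule.mem_orthogonal_singleton_iff_inner_left.mp hu0mem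
    have : ⟪w, u0⟫ = 0 := by rw [real_inner_comm]; exact h0
    rw [real_inner_smul_right, this, mul_zero]

lemma span_perp (w u : Pl) (hw : w ≠ 0) (hu : u ≠ 0) (hperp : ⟪w,u⟫ = 0)
    (v : Pl) (hv : ⟪u,v⟫ = 0) : ∃ t : ℝ, v = t • w := by
  have hperp' : ⟪u,w⟫ = 0 := by rw [real_inner_comm]; exact hperp
  set q : Pl := ⟪w,w⟫ • v - ⟪w,v⟫ • w with hq
  have h1 : ⟪w,q⟫ = 0 := by
    simp only [hq, inner_sub_right, real_inner_smul_right]; ring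
  have h2 : ⟪u,q⟫ = 0 := by
    simp only [hq, inner_sub_right, real_inner_smul_right, hv, hperp']; ring
  have hq0 := uniq_zero w u q (perp_indep w u hw hu hperp) h1 h2
  refine ⟨⟪w,v⟫ / ⟪w,w⟫, ?_⟩
  rw [hq, sub_eq_zero] at hq0
  calc v = (⟪w,w⟫)⁻¹ • (⟪w,w⟫ • v) := by
        rw [smul_smul, inv_mul_cancel₀ (inner_self_ne w hw), one_smul]
    _ = (⟪w,w⟫)⁻¹ • (⟪w,v⟫ • w) := by rw [hq0]
    _ = (⟪w,v⟫ / ⟪w,w⟫) • w := by rw [smul_smul, div_eq_inv_mul]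

lemma expand2 (u w : Pl) (hu : ‖u‖ = 1) (hw : ‖w‖ = 1) (huw : ⟪u,w⟫ = 0) (v : Pl) :
    v = ⟪u,v⟫ • u + ⟪w,v⟫ • w := by
  have hune : u ≠ 0 := by intro h; rw [h] at hu; simp at hu
  have hwne : w ≠ 0 := by intro h; rw [h] at hw; simp at hw
  have huw' : ⟪w,u⟫ = 0 := by rw [real_inner_comm]; exact huw
  have hu2 : ⟪u,u⟫ = 1 := by rw [real_inner_self_eq_norm_sq, hu]; norm_num
  have hw2 : ⟪w,w⟫ = 1 := by rw [real_inner_self_eq_norm_sq, hw]; norm_num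
  set q : Pl := v - (⟪u,v⟫ • u + ⟪w,v⟫ • w) with hq
  have h1 : ⟪u,q⟫ = 0 := by
    simp only [hq, inner_sub_right, inner_add_right, real_inner_smul_right, hu2, huw]; ring
  have h2 : ⟪w,q⟫ = 0 := by
    simp only [hq, inner_sub_right, inner_add_right, real_inner_smul_right, hw2, huw']; ring
  have := uniq_zero u w q (perp_indep u w hune hwne huw) h1 h2
  rw [hq, sub_eq_zero] at this
  exact this

lemma normsq_decomp (u w : Pl) (hu : ‖u‖ = 1) (hw : ‖w‖ = 1) (huw : ⟪u,w⟫ = 0) (v : Pl) :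
    ‖v‖^2 = ⟪u,v⟫^2 + ⟪w,v⟫^2 := by
  have huw' : ⟪w,u⟫ = 0 := by rw [real_inner_comm]; exact huw
  have hu2 : ⟪u,u⟫ = 1 := by rw [real_inner_self_eq_norm_sq, hu]; norm_num
  have hw2 : ⟪w,w⟫ = 1 := by rw [real_inner_self_eq_norm_sq, hw]; norm_num
  conv_lhs => rw [← real_inner_self_eq_norm_sq, expand2 u w hu hw huw v]
  simp only [inner_add_left, inner_add_right, real_inner_smul_left, real_inner_smul_right,
    hu2, hw2, huw, huw']
  ring

lemma solve2 (v w : Pl) (hind : ∀ a b : ℝ, a•v + b•w = 0 → a = 0 ∧ b = 0) (c d : ℝ) :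
    ∃! z : Pl, ⟪z,v⟫ = c ∧ ⟪z,w⟫ = d := by
  have hwne : w ≠ 0 := by
    intro h
    have := (hind 0 1 (by simp [h])).2
    norm_num at this
  have hcomm : ⟪w,v⟫ = ⟪v,w⟫ := real_inner_comm v w
  obtain ⟨A, hA⟩ : ∃ A, ⟪v,v⟫ = A := ⟨_, rfl⟩
  obtain ⟨B, hB⟩ : ∃ B, ⟪w,w⟫ = B := ⟨_, rfl⟩
  obtain ⟨C, hC⟩ : ∃ C, ⟪v,w⟫ = C := ⟨_, rfl⟩
  set G : ℝ := A * B - C^2 with hG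
  have hGne : G ≠ 0 := by
    intro h0
    set q : Pl := B • v - C • w with hq
    have h1 : ⟪v,q⟫ = 0 := by
      simp only [hq, inner_sub_right, real_inner_smul_right, hA, hC]
      nlinarith [hG ▸ h0]
    have h2 : ⟪w,q⟫ = 0 := by
      simp only [hq, inner_sub_right, real_inner_smul_right, hB, hcomm, hC]; ring
    have hq0 := uniq_zero v w q hind h1 h2
    rw [hq, sub_eq_zero] at hq0
    have hrel : B • v + (-C) • w = 0 := by rw [neg_smul, ← sub_eq_add_neg, hq0, sub_self]
    have := (hind _ _ hrel).1
    exact inner_self_ne w hwne (hB ▸ this)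
  refine ⟨((c*B - d*C)/G) • v + ((d*A - c*C)/G) • w, ⟨?_, ?_⟩, ?_⟩
  · simp only [inner_add_left, real_inner_smul_left, hA, hcomm, hC]
    field_simp
    ring
  · simp only [inner_add_left, real_inner_smul_left, hB, hcomm, hC]
    field_simp
    ring
  · rintro z' ⟨hz1, hz2⟩
    have hzv : ⟪((c*B - d*C)/G) • v + ((d*A - c*C)/G) • w, v⟫ = c := by
      simp only [inner_add_left, real_inner_smul_left, hA, hcomm, hC]
      field_simp; ring
    have hzw : ⟪((c*B - d*C)/G) • v + ((d*A - c*C)/G) • w, w⟫ = d := by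
      simp only [inner_add_left, real_inner_smul_left, hB, hcomm, hC]
      field_simp; ring
    have h1 : ⟪v, z' - (((c*B - d*C)/G) • v + ((d*A - c*C)/G) • w)⟫ = 0 := by
      rw [real_inner_comm, inner_sub_left, hz1, hzv, sub_self]
    have h2 : ⟪w, z' - (((c*B - d*C)/G) • v + ((d*A - c*C)/G) • w)⟫ = 0 := by
      rw [real_inner_comm, inner_sub_left, hz2, hzw, sub_self]
    have := uniq_zero v w _ hind h1 h2
    rwa [sub_eq_zero] at this

lemma quad_unique (b c : ℝ) : (∃! t : ℝ, t^2 + 2*b*t + c = 0) ↔ b^2 = c := by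
  constructor
  · rintro ⟨t, ht, hu⟩
    have h2 : (-2*b - t)^2 + 2*b*(-2*b - t) + c = 0 := by nlinarith [ht]
    have := hu _ h2
    nlinarith [this, ht]
  · intro h
    refine ⟨-b, by nlinarith, ?_⟩
    intro t ht
    have : (t + b)^2 = 0 := by nlinarith
    have := pow_eq_zero_iff (n := 2) (by norm_num) |>.mp this
    linarith


lemma apo_sq_eq_pos (a b : ℝ) (ha : 0 ≤ a) (hb : 0 < b) : a^2 = b^2 ↔ a = b := by
  constructor
  · intro h
    have h2 : (a - b) * (a + b) = 0 := by nlinarith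
    rcases mul_eq_zero.mp h2 with h3 | h3
    · linarith
    · linarith
  · intro h; rw [h]

lemma apo_sq_eq_abs (a b : ℝ) (ha : 0 ≤ a) : a^2 = b^2 ↔ a = |b| := by
  rw [← sq_abs b]
  constructor
  · intro h
    have h2 : (a - |b|) * (a + |b|) = 0 := by nlinarith
    rcases mul_eq_zero.mp h2 with h3 | h3
    · linarith
    · have := abs_nonneg b; linarith
  · intro h; rw [h]

lemma line_char_exists (L : AffineSubspace ℝ Pl) (hL : Module.finrank ℝ L.direction = 1)
    (q₁ : Pl) (hq₁ : q₁ ∈ L) :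
    ∃ u : Pl, ∃ d : ℝ, ‖u‖ = 1 ∧ ∀ q : Pl, q ∈ L ↔ ⟪u,q⟫ = d := by
  obtain ⟨w₀, hw₀ne, hgen⟩ := finrank_eq_one_iff'.mp hL
  have hw : (w₀ : Pl) ≠ 0 := fun h => hw₀ne (by ext1; exact h)
  obtain ⟨u, hu1, hwu⟩ := exists_unit_perp _ hw
  have hune : u ≠ 0 := by intro h; rw [h] at hu1; simp at hu1
  have huw : ⟪u,(w₀:Pl)⟫ = 0 := by rw [real_inner_comm]; exact hwu
  refine ⟨u, ⟪u,q₁⟫, hu1, fun q => ?_⟩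
  have hmem : q ∈ L ↔ q - q₁ ∈ L.direction := by
    constructor
    · intro h; exact AffineSubspace.vsub_mem_direction h hq₁
    · intro h
      have := (AffineSubspace.vadd_mem_iff_mem_direction (q - q₁) hq₁).mpr h
      simpa using this
  rw [hmem]
  constructor
  · intro h
    obtain ⟨c, hc⟩ := hgen ⟨q - q₁, h⟩
    have hc' : q - q₁ = c • (w₀ : Pl) := by
      have := congrArg (Subtype.val) hc; exact this.symm
    have : ⟪u, q - q₁⟫ = 0 := by rw [hc', real_inner_smul_right, huw, mul_zero]
    rw [inner_sub_right] at this
    linarith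
  · intro h
    have h0 : ⟪u, q - q₁⟫ = 0 := by rw [inner_sub_right]; linarith
    obtain ⟨t, ht⟩ := span_perp _ u hw hune hwu _ h0
    rw [ht]
    exact L.direction.smul_mem t w₀.2

/-- Tangency of a line given by unit-normal characterization. -/
lemma line_tangent_iff (L : AffineSubspace ℝ Pl) (u : Pl) (d : ℝ) (hu : ‖u‖ = 1)
    (hchar : ∀ q : Pl, q ∈ L ↔ ⟪u,q⟫ = d) (x : Pl) (r : ℝ) (hr : 0 < r) :
    LineTangent L x r ↔ (⟪u,x⟫ - d)^2 = r^2 := by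
  have hune : u ≠ 0 := by intro h; rw [h] at hu; simp at hu
  have hu2 : ⟪u,u⟫ = 1 := by rw [real_inner_self_eq_norm_sq, hu]; norm_num
  obtain ⟨w, hw1, huw⟩ := exists_unit_perp u hune
  have hwne : w ≠ 0 := by intro h; rw [h] at hw1; simp at hw1
  have hwu : ⟪w,u⟫ = 0 := by rw [real_inner_comm]; exact huw
  set q₀ : Pl := d • u with hq₀def
  have hq₀ : ⟪u,q₀⟫ = d := by rw [hq₀def, real_inner_smul_right, hu2, mul_one]
  have hparam : ∀ q : Pl, q ∈ L ↔ ∃ t : ℝ, q = q₀ + t • w := by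
    intro q
    rw [hchar q]
    constructor
    · intro h
      have h0 : ⟪u, q - q₀⟫ = 0 := by rw [inner_sub_right, hq₀]; linarith
      obtain ⟨t, ht⟩ := span_perp w u hwne hune hwu _ h0
      exact ⟨t, by rw [← ht]; abel⟩
    · rintro ⟨t, rfl⟩
      rw [inner_add_right, hq₀, real_inner_smul_right, huw, mul_zero, add_zero]
  have hkey : ∀ t : ℝ, (q₀ + t • w ∈ K x r) ↔
      t^2 + 2*⟪w, q₀ - x⟫*t + (‖q₀ - x‖^2 - r^2) = 0 := by
    intro t
    have hdist : dist (q₀ + t • w) x = ‖(q₀ - x) + t • w‖ := by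
      rw [dist_eq_norm]; congr 1; abel
    have hn : ‖(q₀ - x) + t • w‖^2 = ‖q₀ - x‖^2 + 2*⟪w, q₀-x⟫*t + t^2 := by
      rw [norm_add_sq_real, real_inner_smul_right, norm_smul, Real.norm_eq_abs, hw1, mul_one,
        ← sq_abs t]
      rw [real_inner_comm]
      ring
    constructor
    · intro h
      have h1 : dist (q₀ + t • w) x = r := h
      have h2 : ‖(q₀ - x) + t • w‖^2 = r^2 := by rw [← hdist, h1]
      rw [hn] at h2; linarith
    · intro h
      show dist (q₀ + t • w) x = r
      rw [hdist]
      rw [← apo_sq_eq_pos _ _ (norm_nonneg _) hr, hn]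
      linarith
  constructor
  · rintro ⟨q, ⟨hqL, hqK⟩, huniq⟩
    obtain ⟨t, rfl⟩ := (hparam q).mp hqL
    have hq : ∃! t : ℝ, t^2 + 2*⟪w, q₀ - x⟫*t + (‖q₀ - x‖^2 - r^2) = 0 := by
      refine ⟨t, (hkey t).mp hqK, ?_⟩
      intro t' ht'
      have : q₀ + t' • w = q₀ + t • w :=
        huniq _ ⟨(hparam _).mpr ⟨t', rfl⟩, (hkey t').mpr ht'⟩
      have : t' • w = t • w := by
        have := sub_eq_zero.mpr this
        rw [show q₀ + t' • w - (q₀ + t • w) = t' • w - t • w from by abel, sub_eq_zero] at this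
        exact this
      by_contra hne
      exact hne (smul_left_injective ℝ hwne this)
    have hb := (quad_unique _ _).mp hq
    have hdec := normsq_decomp u w hu hw1 huw (q₀ - x)
    have hud : ⟪u, q₀ - x⟫ = d - ⟪u,x⟫ := by rw [inner_sub_right, hq₀]
    rw [hud] at hdec
    nlinarith [hb, hdec]
  · intro h
    have hb : (⟪w, q₀ - x⟫)^2 = ‖q₀ - x‖^2 - r^2 := by
      have hdec := normsq_decomp u w hu hw1 huw (q₀ - x)
      have hud : ⟪u, q₀ - x⟫ = d - ⟪u,x⟫ := by rw [inner_sub_right, hq₀]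
      rw [hud] at hdec
      nlinarith [h, hdec]
    obtain ⟨t, ht, htu⟩ := (quad_unique (⟪w, q₀ - x⟫) (‖q₀ - x‖^2 - r^2)).mpr hb
    refine ⟨q₀ + t • w, ⟨(hparam _).mpr ⟨t, rfl⟩, (hkey t).mpr ht⟩, ?_⟩
    rintro q ⟨hqL, hqK⟩
    obtain ⟨t', rfl⟩ := (hparam q).mp hqL
    rw [htu t' ((hkey t').mp hqK)]

/-- membership characterization for the constructed tangent lines -/
lemma mk'_char (z₀ q₀ : Pl) :
    ∀ q : Pl, q ∈ AffineSubspace.mk' q₀ ((Submodule.span ℝ {z₀})ᗮ) ↔ ⟪z₀,q⟫ = ⟪z₀,q₀⟫ := by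
  intro q
  rw [AffineSubspace.mem_mk']
  have : (q -ᵥ q₀ : Pl) = q - q₀ := rfl
  rw [this, Submodule.mem_orthogonal_singleton_iff_inner_left]
  constructor
  · intro h
    have : ⟪z₀, q - q₀⟫ = 0 := by rw [real_inner_comm]; exact h
    rw [inner_sub_right] at this; linarith
  · intro h
    have : ⟪z₀, q - q₀⟫ = 0 := by rw [inner_sub_right]; linarith
    rw [real_inner_comm]; exact this

lemma mk'_finrank (z₀ : Pl) (hz : z₀ ≠ 0) (q₀ : Pl) :
    Module.finrank ℝ (AffineSubspace.mk' q₀ ((Submodule.span ℝ {z₀})ᗮ)).direction = 1 := by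
  rw [AffineSubspace.direction_mk']
  have h1 := Submodule.finrank_add_finrank_orthogonal (𝕜 := ℝ) (Submodule.span ℝ {z₀})
  rw [finrank_span_singleton hz] at h1
  have h2 : Module.finrank ℝ Pl = 2 := by simp
  omega

/-- Two unit-normal characterizations of the same line agree up to sign. -/
lemma char_unique (L : AffineSubspace ℝ Pl) (u d u' d') (hu : ‖u‖ = 1) (hu' : ‖u'‖ = 1)
    (hc : ∀ q : Pl, q ∈ L ↔ ⟪u,q⟫ = d) (hc' : ∀ q : Pl, q ∈ L ↔ ⟪u',q⟫ = d') :
    (u' = u ∧ d' = d) ∨ (u' = -u ∧ d' = -d) := by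
  have hune : u ≠ 0 := by intro h; rw [h] at hu; simp at hu
  have hu2 : ⟪u,u⟫ = 1 := by rw [real_inner_self_eq_norm_sq, hu]; norm_num
  obtain ⟨w, hw1, huw⟩ := exists_unit_perp u hune
  have hq₀ : (d • u : Pl) ∈ L := (hc _).mpr (by rw [real_inner_smul_right, hu2, mul_one])
  have hq₁ : (d • u + w : Pl) ∈ L := (hc _).mpr (by
    rw [inner_add_right, real_inner_smul_right, hu2, huw]; ring)
  have e0 : ⟪u', d • u⟫ = d' := (hc' _).mp hq₀
  have e1 : ⟪u', d • u + w⟫ = d' := (hc' _).mp hq₁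
  have hu'w : ⟪u', w⟫ = 0 := by rw [inner_add_right] at e1; linarith
  have hwu' : ⟪w, u'⟫ = 0 := by rw [real_inner_comm]; exact hu'w
  have hexp := expand2 u w hu hw1 huw u'
  rw [show ⟪w,u'⟫ = 0 from hwu', zero_smul, add_zero] at hexp
  have hsq : ⟪u,u'⟫^2 = 1 := by
    have := congrArg (fun q : Pl => ‖q‖^2) hexp
    rw [norm_smul, Real.norm_eq_abs, hu, mul_one] at this
    rw [hu'] at this
    nlinarith [sq_abs ⟪u,u'⟫, this]
  have hcases : ⟪u,u'⟫ = 1 ∨ ⟪u,u'⟫ = -1 := by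
    have h2 : (⟪u,u'⟫ - 1) * (⟪u,u'⟫ + 1) = 0 := by nlinarith
    rcases mul_eq_zero.mp h2 with h3 | h3
    · left; linarith
    · right; linarith
  have hd' : d' = ⟪u,u'⟫ * d := by
    rw [hexp] at e0
    rw [real_inner_smul_left, real_inner_smul_right, hu2, mul_one] at e0
    linarith
  rcases hcases with h | h
  · left
    constructor
    · rw [hexp, h, one_smul]
    · rw [hd', h, one_mul]
  · right
    constructor
    · rw [hexp, h, neg_one_smul]
    · rw [hd', h]; ring

/-- Two circles that cross cannot have proportional "unit radius vectors". -/
lemma pair_contra (v w : Pl) (r s e f : ℝ) (hr : 0 < r) (hs : 0 < s)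
    (he : e = 1 ∨ e = -1) (hf : f = 1 ∨ f = -1) (hv : ‖v‖ = r) (hw : ‖w‖ = s)
    (hlt1 : |r - s| < ‖v - w‖) (hlt2 : ‖v - w‖ < r + s)
    (heq : (e/r) • v = (f/s) • w) : False := by
  have hveq : v = (e*f*r/s) • w := by
    have h1 : ((e*r) • ((e/r) • v) : Pl) = (e*r) • ((f/s) • w) := by rw [heq]
    rw [smul_smul, smul_smul] at h1
    have he2 : e * e = 1 := by rcases he with h | h <;> rw [h] <;> norm_num
    have : e * r * (e / r) = 1 := by field_simp; linear_combination he2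
    rw [this, one_smul] at h1
    rw [h1]; congr 1; field_simp
  have hd : v - w = ((e*f*r - s)/s) • w := by
    rw [hveq, show (e*f*r - s)/s = e*f*r/s - 1 from by field_simp, sub_smul, one_smul]
  have hnorm : ‖v - w‖ = |e*f*r - s| / s * s := by
    rw [hd, norm_smul, Real.norm_eq_abs, hw, abs_div, abs_of_pos hs]
  rw [div_mul_cancel₀ _ hs.ne'] at hnorm
  rcases he with he' | he' <;> rcases hf with hf' | hf' <;>
    rw [he', hf'] at hnorm <;> simp only [one_mul, neg_mul, neg_neg, mul_one] at hnorm
  · rw [hnorm] at hlt1; exact lt_irrefl _ hlt1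
  · rw [show |(-r) - s| = r + s from by rw [abs_of_neg (by linarith)]; ring] at hnorm
    rw [hnorm] at hlt2; exact lt_irrefl _ hlt2
  · rw [show |(-r) - s| = r + s from by rw [abs_of_neg (by linarith)]; ring] at hnorm
    rw [hnorm] at hlt2; exact lt_irrefl _ hlt2
  · rw [hnorm] at hlt1; exact lt_irrefl _ hlt1

/-- Key nondegeneracy: no vector has prescribed signed inner products with all three
unit radius vectors. -/
lemma c_ne_zero (x₁ x₂ x₃ p z : Pl) (r₁ r₂ r₃ e₁ e₂ e₃ : ℝ)
    (h₁ : 0 < r₁) (h₂ : 0 < r₂) (h₃ : 0 < r₃)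
    (he₁ : e₁ = 1 ∨ e₁ = -1) (he₂ : e₂ = 1 ∨ e₂ = -1) (he₃ : e₃ = 1 ∨ e₃ = -1)
    (hv₁ : ‖x₁ - p‖ = r₁) (hv₂ : ‖x₂ - p‖ = r₂) (hv₃ : ‖x₃ - p‖ = r₃)
    (h₁₂ : |r₁ - r₂| < ‖x₁ - x₂‖ ∧ ‖x₁ - x₂‖ < r₁ + r₂)
    (h₁₃ : |r₁ - r₃| < ‖x₁ - x₃‖ ∧ ‖x₁ - x₃‖ < r₁ + r₃)
    (h₂₃ : |r₂ - r₃| < ‖x₂ - x₃‖ ∧ ‖x₂ - x₃‖ < r₂ + r₃)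
    (hz₁ : ⟪z, x₁ - p⟫ = e₁ * r₁) (hz₂ : ⟪z, x₂ - p⟫ = e₂ * r₂)
    (hz₃ : ⟪z, x₃ - p⟫ = e₃ * r₃) : False := by
  have hsub : ∀ (a b : Pl), a - p - (b - p) = a - b := fun a b => by abel
  set u₁ : Pl := (e₁/r₁) • (x₁ - p) with hu₁def
  set u₂ : Pl := (e₂/r₂) • (x₂ - p) with hu₂def
  set u₃ : Pl := (e₃/r₃) • (x₃ - p) with hu₃def
  have habs : ∀ e : ℝ, e = 1 ∨ e = -1 → |e| = 1 := by rintro e (rfl | rfl) <;> norm_num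
  have hnu : ‖u₁‖ = 1 ∧ ‖u₂‖ = 1 ∧ ‖u₃‖ = 1 := by
    refine ⟨?_, ?_, ?_⟩
    · rw [norm_smul, Real.norm_eq_abs, abs_div, hv₁, habs _ he₁, abs_of_pos h₁]
      field_simp
    · rw [norm_smul, Real.norm_eq_abs, abs_div, hv₂, habs _ he₂, abs_of_pos h₂]
      field_simp
    · rw [norm_smul, Real.norm_eq_abs, abs_div, hv₃, habs _ he₃, abs_of_pos h₃]
      field_simp
  have hsq : ∀ e : ℝ, e = 1 ∨ e = -1 → e * e = 1 := by rintro e (rfl | rfl) <;> norm_num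
  have hzu : ⟪z,u₁⟫ = 1 ∧ ⟪z,u₂⟫ = 1 ∧ ⟪z,u₃⟫ = 1 := by
    refine ⟨?_, ?_, ?_⟩
    · rw [real_inner_smul_right, hz₁]
      field_simp
      linear_combination hsq _ he₁
    · rw [real_inner_smul_right, hz₂]
      field_simp
      linear_combination hsq _ he₂
    · rw [real_inner_smul_right, hz₃]
      field_simp
      linear_combination hsq _ he₃
  have hzne : z ≠ 0 := by
    intro h; rw [h, inner_zero_left] at hzu; exact one_ne_zero hzu.1.symm
  obtain ⟨w, hw1, hzw⟩ := exists_unit_perp z hzne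
  have hwne : w ≠ 0 := by intro h; rw [h] at hw1; simp at hw1
  have hwz : ⟪w,z⟫ = 0 := by rw [real_inner_comm]; exact hzw
  have hgen : ∀ v : Pl, ⟪z,v⟫ = 0 → ∃ t : ℝ, v = t • w :=
    fun v hv => span_perp w z hwne hzne hwz v hv
  obtain ⟨a, ha⟩ := hgen (u₂ - u₁) (by rw [inner_sub_right, hzu.1, hzu.2.1, sub_self])
  obtain ⟨b, hb⟩ := hgen (u₃ - u₁) (by rw [inner_sub_right, hzu.1, hzu.2.2, sub_self])
  have hroot : ∀ t : ℝ, ‖u₁ + t • w‖ = 1 → t = 0 ∨ t = -2*⟪w,u₁⟫ := by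
    intro t ht
    have h2 : ‖u₁ + t • w‖^2 = 1 := by rw [ht]; norm_num
    rw [norm_add_sq_real, hnu.1, norm_smul, Real.norm_eq_abs, hw1, mul_one,
      real_inner_smul_right] at h2
    have h3 : t * (t + 2*⟪u₁,w⟫) = 0 := by nlinarith [sq_abs t, h2]
    rcases mul_eq_zero.mp h3 with h4 | h4
    · left; exact h4
    · right; rw [real_inner_comm] at h4; linarith
  have hu₂eq : u₁ + a • w = u₂ := by rw [← ha]; abel
  have hu₃eq : u₁ + b • w = u₃ := by rw [← hb]; abel
  have hra := hroot a (by rw [hu₂eq, hnu.2.1])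
  have hrb := hroot b (by rw [hu₃eq, hnu.2.2])
  have hpair : u₁ = u₂ ∨ u₁ = u₃ ∨ u₂ = u₃ := by
    rcases hra with h | h
    · left; rw [← hu₂eq, h, zero_smul, add_zero]
    · rcases hrb with h' | h'
      · right; left; rw [← hu₃eq, h', zero_smul, add_zero]
      · right; right; rw [← hu₂eq, ← hu₃eq, h, h']
  have hnorm12 : ‖(x₁ - p) - (x₂ - p)‖ = ‖x₁ - x₂‖ := by rw [hsub]
  have hnorm13 : ‖(x₁ - p) - (x₃ - p)‖ = ‖x₁ - x₃‖ := by rw [hsub]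
  have hnorm23 : ‖(x₂ - p) - (x₃ - p)‖ = ‖x₂ - x₃‖ := by rw [hsub]
  rcases hpair with h | h | h
  · exact pair_contra (x₁ - p) (x₂ - p) r₁ r₂ e₁ e₂ h₁ h₂ he₁ he₂ hv₁ hv₂
      (by rw [hnorm12]; exact h₁₂.1) (by rw [hnorm12]; exact h₁₂.2) h
  · exact pair_contra (x₁ - p) (x₃ - p) r₁ r₃ e₁ e₃ h₁ h₃ he₁ he₃ hv₁ hv₃
      (by rw [hnorm13]; exact h₁₃.1) (by rw [hnorm13]; exact h₁₃.2) h
  · exact pair_contra (x₂ - p) (x₃ - p) r₂ r₃ e₂ e₃ h₂ h₃ he₂ he₃ hv₂ hv₃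
      (by rw [hnorm23]; exact h₂₃.1) (by rw [hnorm23]; exact h₂₃.2) h

/-- The centers of the three circles are affinely independent. -/
lemma centers_indep (x₁ x₂ x₃ p : Pl) (r₁ r₂ r₃ : ℝ)
    (h₁ : 0 < r₁) (h₂ : 0 < r₂) (h₃ : 0 < r₃)
    (hv₁ : ‖x₁ - p‖ = r₁) (hv₂ : ‖x₂ - p‖ = r₂) (hv₃ : ‖x₃ - p‖ = r₃)
    (h₁₂ : |r₁ - r₂| < ‖x₁ - x₂‖ ∧ ‖x₁ - x₂‖ < r₁ + r₂)
    (h₁₃ : |r₁ - r₃| < ‖x₁ - x₃‖ ∧ ‖x₁ - x₃‖ < r₁ + r₃)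
    (h₂₃ : |r₂ - r₃| < ‖x₂ - x₃‖ ∧ ‖x₂ - x₃‖ < r₂ + r₃)
    (huniq : ∀ q : Pl, dist q x₁ = r₁ → dist q x₂ = r₂ → dist q x₃ = r₃ → q = p) :
    ∀ a b : ℝ, a • (x₂ - x₁) + b • (x₃ - x₁) = 0 → a = 0 ∧ b = 0 := by
  intro a b hab
  by_contra hne
  -- find common direction w
  have hX3 : x₃ - x₁ ≠ 0 := by
    intro h
    rw [show x₃ - x₁ = -(x₁ - x₃) from by abel, neg_eq_zero] at h
    rw [h, norm_zero] at h₁₃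
    have := abs_nonneg (r₁ - r₃); linarith [h₁₃.1]
  have hX2 : x₂ - x₁ ≠ 0 := by
    intro h
    rw [show x₂ - x₁ = -(x₁ - x₂) from by abel, neg_eq_zero] at h
    rw [h, norm_zero] at h₁₂
    have := abs_nonneg (r₁ - r₂); linarith [h₁₂.1]
  have hane : a ≠ 0 := by
    intro ha0
    rw [ha0, zero_smul, zero_add] at hab
    rcases smul_eq_zero.mp hab with h | h
    · exact hne ⟨ha0, h⟩
    · exact hX3 h
  obtain ⟨w, s₂, s₃, hwne, hw2, hw3⟩ :
      ∃ (w : Pl) (s₂ s₃ : ℝ), w ≠ 0 ∧ x₂ - x₁ = s₂ • w ∧ x₃ - x₁ = s₃ • w := by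
    refine ⟨x₃ - x₁, -b/a, 1, hX3, ?_, (one_smul _ _).symm⟩
    have h' : a • (x₂ - x₁) = -(b • (x₃ - x₁)) := eq_neg_of_add_eq_zero_left hab
    rw [show x₂ - x₁ = a⁻¹ • (a • (x₂ - x₁)) from by
      rw [smul_smul, inv_mul_cancel₀ hane, one_smul], h', smul_neg, smul_smul, ← neg_smul]
    congr 1
    field_simp
  obtain ⟨u, hu1, hwu⟩ := exists_unit_perp w hwne
  have hune : u ≠ 0 := by intro h; rw [h] at hu1; simp at hu1
  have huw : ⟪u,w⟫ = 0 := by rw [real_inner_comm]; exact hwu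
  set κ : ℝ := ⟪u, p - x₁⟫ with hκ
  set p' : Pl := p - (2*κ) • u with hp'
  -- p' is on all three circles
  have hdist : ∀ (x : Pl) (t : ℝ), x - x₁ = t • w → ‖p' - x‖ = ‖p - x‖ := by
    intro x t hx
    have hip : ⟪u, p - x⟫ = κ := by
      have hd : p - x = (p - x₁) - (x - x₁) := by abel
      rw [hd, inner_sub_right, hx, real_inner_smul_right, huw, mul_zero, sub_zero]
    have hsq : ‖p' - x‖^2 = ‖p - x‖^2 := by
      have : p' - x = (p - x) + (-(2*κ)) • u := by rw [hp', neg_smul]; abel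
      rw [this, norm_add_sq_real, real_inner_smul_right, norm_smul, Real.norm_eq_abs, hu1,
        mul_one, real_inner_comm, hip]
      rw [sq_abs]
      ring
    rcases eq_or_lt_of_le (norm_nonneg (p - x)) with h | h
    · have : ‖p' - x‖^2 = 0 := by rw [hsq, ← h]; ring
      rw [← h]
      have := pow_eq_zero_iff (n := 2) (by norm_num) |>.mp this
      rw [this]
    · exact (apo_sq_eq_pos _ _ (norm_nonneg _) h).mp hsq
  have hd1 : ‖p' - x₁‖ = ‖p - x₁‖ := hdist x₁ 0 (by rw [zero_smul]; abel)
  have hd2 : ‖p' - x₂‖ = ‖p - x₂‖ := hdist x₂ s₂ hw2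
  have hd3 : ‖p' - x₃‖ = ‖p - x₃‖ := hdist x₃ s₃ hw3
  have hnr : ∀ q : Pl, ∀ x : Pl, ‖x - q‖ = ‖q - x‖ := fun q x => norm_sub_rev x q
  have hp'eq : p' = p := by
    apply huniq
    · rw [dist_eq_norm, hd1, ← hnr, hv₁]
    · rw [dist_eq_norm, hd2, ← hnr, hv₂]
    · rw [dist_eq_norm, hd3, ← hnr, hv₃]
  have hκ0 : κ = 0 := by
    have : (2*κ) • u = 0 := by
      rw [hp'] at hp'eq
      have := sub_eq_zero.mpr hp'eq
      rw [show p - (2*κ) • u - p = -((2*κ) • u) from by abel, neg_eq_zero] at this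
      exact this
    rcases smul_eq_zero.mp this with h | h
    · linarith
    · exact absurd h hune
  -- p - x₁ is parallel to w
  have hκ0' : ⟪u, x₁ - p⟫ = 0 := by
    rw [show x₁ - p = -(p - x₁) from by abel, inner_neg_right, ← hκ, hκ0, neg_zero]
  obtain ⟨t₁, ht₁⟩ := span_perp w u hwne hune hwu (x₁ - p) hκ0'
  have hc2 : x₂ - p = (s₂ + t₁) • w := by
    rw [show x₂ - p = (x₂ - x₁) + (x₁ - p) from by abel, hw2, ht₁, ← add_smul]
  have hc3 : x₃ - p = (s₃ + t₁) • w := by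
    rw [show x₃ - p = (x₃ - x₁) + (x₁ - p) from by abel, hw3, ht₁, ← add_smul]
  -- the three coefficients
  set c₁ : ℝ := t₁ with hc₁def
  have key : ∀ (ci cj : ℝ) (xi xj : Pl) (ri rj : ℝ), 0 < ri → 0 < rj →
      ‖xi - p‖ = ri → ‖xj - p‖ = rj → xi - p = ci • w → xj - p = cj • w →
      (|ri - rj| < ‖xi - xj‖) → (‖xi - xj‖ < ri + rj) → 0 < ci * cj → False := by
    intro ci cj xi xj ri rj hri hrj hni hnj hci hcj hlt1 hlt2 hpos
    have hcine : ci ≠ 0 := by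
      intro h; rw [h] at hpos; simp at hpos
    have hcjne : cj ≠ 0 := by
      intro h; rw [h] at hpos; simp at hpos
    have hri' : ri = |ci| * ‖w‖ := by rw [← hni, hci, norm_smul, Real.norm_eq_abs]
    have hrj' : rj = |cj| * ‖w‖ := by rw [← hnj, hcj, norm_smul, Real.norm_eq_abs]
    have heq : (1/ri) • (xi - p) = (1/rj) • (xj - p) := by
      rw [hci, hcj, smul_smul, smul_smul]
      congr 1
      rw [one_div, one_div, inv_mul_eq_div, inv_mul_eq_div, div_eq_div_iff hri.ne' hrj.ne',
        hri', hrj']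
      rcases lt_trichotomy ci 0 with h | h | h
      · rcases lt_trichotomy cj 0 with h' | h' | h'
        · rw [abs_of_neg h, abs_of_neg h']; ring
        · exact absurd h' hcjne
        · nlinarith
      · exact absurd h hcine
      · rcases lt_trichotomy cj 0 with h' | h' | h'
        · nlinarith
        · exact absurd h' hcjne
        · rw [abs_of_pos h, abs_of_pos h']; ring
    have hnd : ‖(xi - p) - (xj - p)‖ = ‖xi - xj‖ := by
      rw [show (xi - p) - (xj - p) = xi - xj from by abel]
    exact pair_contra (xi - p) (xj - p) ri rj 1 1 hri hrj (Or.inl rfl) (Or.inl rfl)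
      hni hnj (by rw [hnd]; exact hlt1) (by rw [hnd]; exact hlt2) heq
  have hwn0 : ‖w‖ ≠ 0 := norm_ne_zero_iff.mpr hwne
  have hcoe : ∀ (x : Pl) (r c : ℝ), 0 < r → ‖x - p‖ = r → x - p = c • w → c ≠ 0 := by
    intro x r c hr hn hc h0
    rw [h0, zero_smul] at hc
    rw [hc, norm_zero] at hn
    linarith
  have h1ne := hcoe x₁ r₁ t₁ h₁ hv₁ ht₁
  have h2ne := hcoe x₂ r₂ (s₂ + t₁) h₂ hv₂ hc2
  have h3ne := hcoe x₃ r₃ (s₃ + t₁) h₃ hv₃ hc3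
  have htri : 0 < t₁ * (s₂ + t₁) ∨ 0 < t₁ * (s₃ + t₁) ∨ 0 < (s₂ + t₁) * (s₃ + t₁) := by
    rcases lt_or_gt_of_ne h1ne with h | h
    · rcases lt_or_gt_of_ne h2ne with h' | h'
      · exact Or.inl (mul_pos_of_neg_of_neg h h')
      · rcases lt_or_gt_of_ne h3ne with h'' | h''
        · exact Or.inr (Or.inl (mul_pos_of_neg_of_neg h h''))
        · exact Or.inr (Or.inr (mul_pos h' h''))
    · rcases lt_or_gt_of_ne h2ne with h' | h'
      · rcases lt_or_gt_of_ne h3ne with h'' | h''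
        · exact Or.inr (Or.inr (mul_pos_of_neg_of_neg h' h''))
        · exact Or.inr (Or.inl (mul_pos h h''))
      · exact Or.inl (mul_pos h h')
  rcases htri with h | h | h
  · exact key t₁ (s₂ + t₁) x₁ x₂ r₁ r₂ h₁ h₂ hv₁ hv₂ ht₁ hc2 h₁₂.1 h₁₂.2 h
  · exact key t₁ (s₃ + t₁) x₁ x₃ r₁ r₃ h₁ h₃ hv₁ hv₃ ht₁ hc3 h₁₃.1 h₁₃.2 h
  · exact key (s₂ + t₁) (s₃ + t₁) x₂ x₃ r₂ r₃ h₂ h₃ hv₂ hv₃ hc2 hc3 h₂₃.1 h₂₃.2 h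

def sgB (b : Bool) : ℝ := if b then 1 else -1
lemma sgB_mem (b : Bool) : sgB b = 1 ∨ sgB b = -1 := by cases b <;> simp [sgB]

lemma pm_mul (a b : ℝ) (ha : a = 1 ∨ a = -1) (hb : b = 1 ∨ b = -1) :
    a * b = 1 ∨ a * b = -1 := by
  rcases ha with rfl | rfl <;> rcases hb with rfl | rfl <;> norm_num

lemma pm_sq (a : ℝ) (ha : a = 1 ∨ a = -1) : a^2 = 1 := by
  rcases ha with rfl | rfl <;> norm_num

lemma pm_abs (a : ℝ) (ha : a = 1 ∨ a = -1) : |a| = 1 := by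
  rcases ha with rfl | rfl <;> norm_num

lemma pm_ne (a : ℝ) (ha : a = 1 ∨ a = -1) : a ≠ 0 := by
  rcases ha with rfl | rfl <;> norm_num

lemma decide_sg (δ δ' : ℝ) [inst : Decidable (δ = δ')]
    (h : δ = 1 ∨ δ = -1) (h' : δ' = 1 ∨ δ' = -1) (b : Bool) :
    decide (δ = δ') = b ↔ δ' = δ * sgB b := by
  rcases h with rfl | rfl <;> rcases h' with rfl | rfl <;> cases b <;>
    simp [sgB] <;> norm_num

open Classical in
noncomputable def dC (y : Pl) (s : ℝ) (x : Pl) (r : ℝ) : ℝ :=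
  if dist y x = s + r then -1 else 1

lemma dC_mem (y x : Pl) (s r : ℝ) : dC y s x r = 1 ∨ dC y s x r = -1 := by
  rw [dC]; split
  · right; rfl
  · left; rfl

lemma dC_sq (y x : Pl) (s r : ℝ) (h : CircleTangent y s x r) :
    ‖y - x‖^2 = (s - dC y s x r * r)^2 := by
  rw [dC]; split
  · next h' =>
    rw [← dist_eq_norm, h']; ring
  · next h' =>
    rcases h with h1 | h1
    · exact absurd h1 h'
    · rw [← dist_eq_norm, h1, sq_abs]; ring

lemma dC_eq (y x : Pl) (s r e : ℝ) (hs : 0 < s) (hr : 0 < r) (he : e = 1 ∨ e = -1)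
    (hsq : ‖y - x‖^2 = (s - e*r)^2) : dC y s x r = e := by
  rw [dC]
  rcases he with rfl | rfl
  · rw [one_mul] at hsq
    have hd : dist y x = |s - r| := by
      rw [dist_eq_norm]; exact (apo_sq_eq_abs _ _ (norm_nonneg _)).mp hsq
    rw [if_neg]
    rw [hd]
    intro habs
    have h1 : |s - r| < s + r := by
      rw [abs_lt]; constructor <;> linarith
    linarith [habs ▸ h1]
  · have hd : dist y x = s + r := by
      rw [dist_eq_norm]
      have := (apo_sq_eq_abs ‖y - x‖ (s - (-1)*r) (norm_nonneg _)).mp hsq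
      rw [this, show s - (-1)*r = s + r from by ring, abs_of_pos (by linarith)]
    rw [if_pos hd]

lemma tangent_of_sq (y x : Pl) (s r e : ℝ) (hr : 0 ≤ r) (hs : 0 ≤ s)
    (he : e = 1 ∨ e = -1) (hsq : ‖y - x‖^2 = (s - e*r)^2) : CircleTangent y s x r := by
  rcases he with rfl | rfl
  · right
    rw [dist_eq_norm, one_mul] at *
    exact (apo_sq_eq_abs _ _ (norm_nonneg _)).mp hsq
  · left
    rw [dist_eq_norm]
    have := (apo_sq_eq_abs ‖y - x‖ (s - (-1)*r) (norm_nonneg _)).mp hsq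
    rw [this, show s - (-1)*r = s + r from by ring, abs_of_nonneg (by linarith)]

lemma if_mem (P : Prop) [Decidable P] : (if P then (1:ℝ) else -1) = 1 ∨
    (if P then (1:ℝ) else -1) = -1 := by split <;> simp

lemma sign_if (v r e : ℝ) [Decidable (v = r)] (hr : 0 < r) (he : e = 1 ∨ e = -1)
    (hv : v = e * r) : (if v = r then (1:ℝ) else -1) = e := by
  rcases he with rfl | rfl
  · rw [if_pos (by linarith [hv])]
  · rw [if_neg (by intro h; rw [h] at hv; linarith)]

lemma if_sign (v r : ℝ) [Decidable (v = r)] (hr : 0 < r) (hsq : v^2 = r^2) :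
    v = (if v = r then (1:ℝ) else -1) * r := by
  split
  · next h => rw [one_mul]; exact h
  · next h =>
    have h2 : (v - r) * (v + r) = 0 := by nlinarith
    rcases mul_eq_zero.mp h2 with h3 | h3
    · exact absurd (by linarith) h
    · rw [neg_one_mul]; linarith

lemma norm_sub_sq_real' (x y : Pl) : ‖x - y‖^2 = ‖x‖^2 - 2*⟪x,y⟫ + ‖y‖^2 :=
  norm_sub_sq_real x y

lemma circle_sq_iff (y xi pp : Pl) (s ri σ εi δi : ℝ) (hri : ‖xi - pp‖ = ri)
    (hs2 : s^2 = σ^2) (hsd : s * δi = σ * εi) (hd2 : δi^2 = 1) :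
    ‖y - xi‖^2 = (s - δi*ri)^2 ↔
      2*⟪y - pp, xi - pp⟫ - 2*(σ*εi)*ri = ‖y - pp‖^2 - σ^2 := by
  have hsplit : (y - xi : Pl) = (y - pp) - (xi - pp) := by abel
  rw [hsplit, norm_sub_sq_real', hri]
  have hexp : (s - δi*ri)^2 = s^2 - 2*(s*δi)*ri + δi^2*ri^2 := by ring
  have hsd' : s*δi*ri = σ*εi*ri := by rw [hsd]
  have hd2' : δi^2*ri^2 = ri^2 := by rw [hd2, one_mul]
  constructor <;> intro h <;> nlinarith [h, hexp, hsd', hd2', hs2]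


lemma pm_neg (a : ℝ) (ha : a = 1 ∨ a = -1) : -a = 1 ∨ -a = -1 := by
  rcases ha with rfl | rfl
  · right; norm_num
  · left; norm_num

open Classical in
noncomputable def clsA (x₁ x₂ x₃ : Pl) (r₁ r₂ r₃ : ℝ) (a : Pl × ℝ) : Bool × Bool :=
  (decide (dC a.1 a.2 x₁ r₁ = dC a.1 a.2 x₂ r₂), decide (dC a.1 a.2 x₁ r₁ = dC a.1 a.2 x₃ r₃))


open Classical in
noncomputable def lineUD (L : AffineSubspace ℝ Pl) : Pl × ℝ :=
  if h : ∃ u : Pl, ∃ d : ℝ, ‖u‖ = 1 ∧ ∀ q : Pl, q ∈ L ↔ ⟪u,q⟫ = d then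
    (h.choose, h.choose_spec.choose) else 0


lemma lineUD_spec (L : AffineSubspace ℝ Pl)
    (h : ∃ u : Pl, ∃ d : ℝ, ‖u‖ = 1 ∧ ∀ q : Pl, q ∈ L ↔ ⟪u,q⟫ = d) :
    ‖(lineUD L).1‖ = 1 ∧ ∀ q : Pl, q ∈ L ↔ ⟪(lineUD L).1, q⟫ = (lineUD L).2 := by
  rw [lineUD, dif_pos h]
  exact ⟨h.choose_spec.choose_spec.1, h.choose_spec.choose_spec.2⟩


open Classical in
noncomputable def clsB (x₁ x₂ x₃ : Pl) (r₁ r₂ r₃ : ℝ) (L : AffineSubspace ℝ Pl) : Bool × Bool :=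
  ((decide ((if ⟪(lineUD L).1, x₁⟫ - (lineUD L).2 = r₁ then (1:ℝ) else -1) =
    (if ⟪(lineUD L).1, x₂⟫ - (lineUD L).2 = r₂ then (1:ℝ) else -1))),
   (decide ((if ⟪(lineUD L).1, x₁⟫ - (lineUD L).2 = r₁ then (1:ℝ) else -1) =
    (if ⟪(lineUD L).1, x₃⟫ - (lineUD L).2 = r₃ then (1:ℝ) else -1))))


/-- Tangency to all three circles with given relative sign pattern, for circles. -/
def CircleSigned (x₁ x₂ x₃ : Pl) (r₁ r₂ r₃ e₂ e₃ : ℝ) (a : Pl × ℝ) : Prop :=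
  ∃ δ : ℝ, (δ = 1 ∨ δ = -1) ∧
    ‖a.1 - x₁‖^2 = (a.2 - δ*r₁)^2 ∧
    ‖a.1 - x₂‖^2 = (a.2 - δ*e₂*r₂)^2 ∧
    ‖a.1 - x₃‖^2 = (a.2 - δ*e₃*r₃)^2

/-- Tangency to all three circles with given relative sign pattern, for lines. -/
def LineSigned (x₁ x₂ x₃ : Pl) (r₁ r₂ r₃ e₂ e₃ : ℝ) (L : AffineSubspace ℝ Pl) : Prop :=
  ∃ u : Pl, ∃ d δ : ℝ, (δ = 1 ∨ δ = -1) ∧ ‖u‖ = 1 ∧ (∀ q : Pl, q ∈ L ↔ ⟪u,q⟫ = d) ∧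
    ⟪u,x₁⟫ - d = δ*r₁ ∧ ⟪u,x₂⟫ - d = δ*e₂*r₂ ∧ ⟪u,x₃⟫ - d = δ*e₃*r₃

lemma class_main (x₁ x₂ x₃ p : Pl) (r₁ r₂ r₃ : ℝ)
    (h₁ : 0 < r₁) (h₂ : 0 < r₂) (h₃ : 0 < r₃)
    (hv₁ : ‖x₁ - p‖ = r₁) (hv₂ : ‖x₂ - p‖ = r₂) (hv₃ : ‖x₃ - p‖ = r₃)
    (h₁₂ : |r₁ - r₂| < ‖x₁ - x₂‖ ∧ ‖x₁ - x₂‖ < r₁ + r₂)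
    (h₁₃ : |r₁ - r₃| < ‖x₁ - x₃‖ ∧ ‖x₁ - x₃‖ < r₁ + r₃)
    (h₂₃ : |r₂ - r₃| < ‖x₂ - x₃‖ ∧ ‖x₂ - x₃‖ < r₂ + r₃)
    (hind : ∀ a b : ℝ, a • (x₂ - x₁) + b • (x₃ - x₁) = 0 → a = 0 ∧ b = 0)
    (e₂ e₃ : ℝ) (he₂ : e₂ = 1 ∨ e₂ = -1) (he₃ : e₃ = 1 ∨ e₃ = -1) :
    ((∃! a : Pl × ℝ, 0 < a.2 ∧ CircleSigned x₁ x₂ x₃ r₁ r₂ r₃ e₂ e₃ a) ∧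
      ∀ L : AffineSubspace ℝ Pl, ¬ LineSigned x₁ x₂ x₃ r₁ r₂ r₃ e₂ e₃ L) ∨
    ((∀ a : Pl × ℝ, ¬ (0 < a.2 ∧ CircleSigned x₁ x₂ x₃ r₁ r₂ r₃ e₂ e₃ a)) ∧
      ∃! L : AffineSubspace ℝ Pl, LineSigned x₁ x₂ x₃ r₁ r₂ r₃ e₂ e₃ L) := by
  obtain ⟨z₀, ⟨hz₀2, hz₀3⟩, hz₀u⟩ :=
    solve2 (x₂ - x₁) (x₃ - x₁) hind (e₂*r₂ - r₁) (e₃*r₃ - r₁)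
  set c : ℝ := ⟪z₀, x₁ - p⟫ - r₁ with hc
  have hA1 : ⟪z₀, x₁ - p⟫ = c + 1*r₁ := by rw [hc]; ring
  have hscal : ∀ (xi : Pl) (ei ri : ℝ), ⟪z₀, xi - x₁⟫ = ei*ri - r₁ →
      ⟪z₀, xi - p⟫ = c + ei*ri := by
    intro xi ei ri hxi
    have hsplit : (xi - p : Pl) = (xi - x₁) + (x₁ - p) := by abel
    rw [hsplit, inner_add_right, hxi, hc]; ring
  have hA2 : ⟪z₀, x₂ - p⟫ = c + e₂*r₂ := hscal x₂ e₂ r₂ hz₀2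
  have hA3 : ⟪z₀, x₃ - p⟫ = c + e₃*r₃ := hscal x₃ e₃ r₃ hz₀3
  have hcne : c ≠ 0 := by
    intro h0
    exact c_ne_zero x₁ x₂ x₃ p z₀ r₁ r₂ r₃ 1 e₂ e₃ h₁ h₂ h₃ (Or.inl rfl) he₂ he₃
      hv₁ hv₂ hv₃ h₁₂ h₁₃ h₂₃ (by rw [hA1, h0]; ring) (by rw [hA2, h0]; ring)
      (by rw [hA3, h0]; ring)
  set k : ℝ := ‖z₀‖^2 - 1 with hk
  have hkval : ‖z₀‖^2 = k + 1 := by rw [hk]; ring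
  -- forward analysis for signed circles
  have hcirc : ∀ a : Pl × ℝ, 0 < a.2 → CircleSigned x₁ x₂ x₃ r₁ r₂ r₃ e₂ e₃ a →
      ∃ σ : ℝ, σ ≠ 0 ∧ a.1 - p = σ • z₀ ∧ σ * k = 2*c ∧ |σ| = a.2 := by
    rintro ⟨y, s⟩ hs ⟨δ, hδ, hsq1, hsq2, hsq3⟩
    set σ : ℝ := δ * s with hσ
    have hδ2 : δ^2 = 1 := pm_sq δ hδ
    have hσne : σ ≠ 0 := mul_ne_zero (pm_ne δ hδ) (ne_of_gt hs)
    have hs2 : s^2 = σ^2 := by rw [hσ]; linear_combination (-(s^2)) * hδ2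
    have hEq1 : 2*⟪y - p, x₁ - p⟫ - 2*(σ*1)*r₁ = ‖y - p‖^2 - σ^2 :=
      (circle_sq_iff y x₁ p s r₁ σ 1 δ hv₁ hs2 (by rw [hσ]; ring) hδ2).mp hsq1
    have hEq2 : 2*⟪y - p, x₂ - p⟫ - 2*(σ*e₂)*r₂ = ‖y - p‖^2 - σ^2 :=
      (circle_sq_iff y x₂ p s r₂ σ e₂ (δ*e₂) hv₂ hs2 (by rw [hσ]; ring)
        (pm_sq _ (pm_mul δ e₂ hδ he₂))).mp (by rw [show (s - δ*e₂*r₂) = (s - (δ*e₂)*r₂) from by ring] at hsq2; exact hsq2)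
    have hEq3 : 2*⟪y - p, x₃ - p⟫ - 2*(σ*e₃)*r₃ = ‖y - p‖^2 - σ^2 :=
      (circle_sq_iff y x₃ p s r₃ σ e₃ (δ*e₃) hv₃ hs2 (by rw [hσ]; ring)
        (pm_sq _ (pm_mul δ e₃ hδ he₃))).mp (by rw [show (s - δ*e₃*r₃) = (s - (δ*e₃)*r₃) from by ring] at hsq3; exact hsq3)
    have hlin2 : ⟪σ⁻¹ • (y - p), x₂ - x₁⟫ = e₂*r₂ - r₁ := by
      have hd : ⟪y - p, x₂ - x₁⟫ = σ*(e₂*r₂ - r₁) := by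
        rw [show (x₂ - x₁ : Pl) = (x₂ - p) - (x₁ - p) from by abel, inner_sub_right]
        linear_combination (1/2)*hEq2 - (1/2)*hEq1
      rw [real_inner_smul_left, hd]
      field_simp
    have hlin3 : ⟪σ⁻¹ • (y - p), x₃ - x₁⟫ = e₃*r₃ - r₁ := by
      have hd : ⟪y - p, x₃ - x₁⟫ = σ*(e₃*r₃ - r₁) := by
        rw [show (x₃ - x₁ : Pl) = (x₃ - p) - (x₁ - p) from by abel, inner_sub_right]
        linear_combination (1/2)*hEq3 - (1/2)*hEq1
      rw [real_inner_smul_left, hd]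
      field_simp
    have hzeq : σ⁻¹ • (y - p) = z₀ := hz₀u _ ⟨hlin2, hlin3⟩
    have hyp : y - p = σ • z₀ := by
      rw [← hzeq, smul_smul, mul_inv_cancel₀ hσne, one_smul]
    have hnorm : ‖y - p‖^2 = σ^2 * ‖z₀‖^2 := by
      rw [hyp, norm_smul, Real.norm_eq_abs, mul_pow, sq_abs]
    have hinner : ⟪y - p, x₁ - p⟫ = σ * ⟪z₀, x₁ - p⟫ := by
      rw [hyp, real_inner_smul_left]
    have hσk : σ * k = 2*c := by
      have h5 : σ * (σ * k) = σ * (2*c) := by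
        rw [hinner, hnorm, hA1, hkval] at hEq1
        linear_combination (-1) * hEq1
      exact mul_left_cancel₀ hσne h5
    have habsσ : |σ| = s := by
      rw [hσ, abs_mul, pm_abs δ hδ, one_mul, abs_of_pos hs]
    exact ⟨σ, hσne, hyp, hσk, habsσ⟩
  -- forward analysis for signed lines
  have hline : ∀ L : AffineSubspace ℝ Pl, LineSigned x₁ x₂ x₃ r₁ r₂ r₃ e₂ e₃ L →
      ‖z₀‖ = 1 ∧ (∀ q : Pl, q ∈ L ↔ ⟪z₀,q⟫ = ⟪z₀,x₁⟫ - r₁) := by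
    rintro L ⟨u, d, δ, hδ, hu1, hchar, hL1, hL2, hL3⟩
    have hδ2 : δ^2 = 1 := pm_sq δ hδ
    have hδne : δ ≠ 0 := pm_ne δ hδ
    have h2 : ⟪δ • u, x₂ - x₁⟫ = e₂*r₂ - r₁ := by
      rw [real_inner_smul_left, inner_sub_right]
      linear_combination δ*hL2 - δ*hL1 + (e₂*r₂ - r₁)*hδ2
    have h3 : ⟪δ • u, x₃ - x₁⟫ = e₃*r₃ - r₁ := by
      rw [real_inner_smul_left, inner_sub_right]
      linear_combination δ*hL3 - δ*hL1 + (e₃*r₃ - r₁)*hδ2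
    have huz : δ • u = z₀ := hz₀u _ ⟨h2, h3⟩
    have hz₀1 : ‖z₀‖ = 1 := by
      rw [← huz, norm_smul, Real.norm_eq_abs, pm_abs δ hδ, hu1, mul_one]
    refine ⟨hz₀1, fun q => ?_⟩
    rw [hchar q]
    have e1 : ⟪z₀,q⟫ = δ*⟪u,q⟫ := by rw [← huz, real_inner_smul_left]
    have e2 : ⟪z₀,x₁⟫ - r₁ = δ*d := by
      have : ⟪z₀,x₁⟫ = δ*⟪u,x₁⟫ := by rw [← huz, real_inner_smul_left]
      rw [this]
      linear_combination δ*hL1 + (r₁)*hδ2 - r₁*1 + hδ2*r₁ - hδ2*r₁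
    constructor
    · intro h; rw [e1, e2, h]
    · intro h
      rw [e1, e2] at h
      exact mul_left_cancel₀ hδne h
  rcases eq_or_ne k 0 with hk0 | hkne
  · -- line case
    right
    have hz₀sq : ‖z₀‖^2 = 1 := by rw [hkval, hk0]; ring
    have hz₀1 : ‖z₀‖ = 1 := by
      rw [← one_pow 2] at hz₀sq
      exact (apo_sq_eq_pos _ _ (norm_nonneg _) one_pos).mp hz₀sq
    have hself : ⟪z₀,z₀⟫ = 1 := by
      rw [real_inner_self_eq_norm_sq, hz₀1]; norm_num
    constructor
    · rintro ⟨y, s⟩ ⟨hs, hsigned⟩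
      obtain ⟨σ, hσne, -, hσk, -⟩ := hcirc (y, s) hs hsigned
      rw [hk0, mul_zero] at hσk
      exact hcne (by linarith)
    · set dstar : ℝ := ⟪z₀,x₁⟫ - r₁ with hdstar
      set LStar : AffineSubspace ℝ Pl :=
        AffineSubspace.mk' (dstar • z₀) ((Submodule.span ℝ {z₀})ᗮ) with hLStar
      have hcharstar : ∀ q : Pl, q ∈ LStar ↔ ⟪z₀,q⟫ = dstar := by
        intro q
        have h := mk'_char z₀ (dstar • z₀) q
        rwa [real_inner_smul_right, hself, mul_one] at h
      have hsub2 : ⟪z₀,x₂⟫ - ⟪z₀,x₁⟫ = e₂*r₂ - r₁ := by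
        have := hz₀2; rw [inner_sub_right] at this; linarith
      have hsub3 : ⟪z₀,x₃⟫ - ⟪z₀,x₁⟫ = e₃*r₃ - r₁ := by
        have := hz₀3; rw [inner_sub_right] at this; linarith
      refine ⟨LStar, ⟨z₀, dstar, 1, Or.inl rfl, hz₀1, hcharstar, by rw [hdstar]; ring,
        by rw [hdstar]; linarith, by rw [hdstar]; linarith⟩, ?_⟩
      intro L hL
      obtain ⟨-, hchL⟩ := hline L hL
      apply SetLike.ext
      intro q
      rw [hchL q, hcharstar q]
  · -- circle case
    left
    constructor
    · set σs : ℝ := 2*c/k with hσs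
      have hσsne : σs ≠ 0 := div_ne_zero (by intro h; exact hcne (by linarith)) hkne
      have hσsk : σs * k = 2*c := by rw [hσs]; field_simp
      set ss : ℝ := |σs| with hss
      have hsspos : 0 < ss := abs_pos.mpr hσsne
      set δs : ℝ := if 0 < σs then 1 else -1 with hδs
      have hδsm : δs = 1 ∨ δs = -1 := by
        rw [hδs]; split
        · exact Or.inl rfl
        · exact Or.inr rfl
      have hσδ : σs = δs * ss := by
        rw [hδs, hss]
        by_cases hpos : 0 < σs
        · rw [if_pos hpos, one_mul, abs_of_pos hpos]
        · have hneg : σs < 0 := lt_of_le_of_ne (not_lt.mp hpos) hσsne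
          rw [if_neg hpos, abs_of_neg hneg]; ring
      set ys : Pl := p + σs • z₀ with hys
      have hyps : ys - p = σs • z₀ := by rw [hys]; abel
      have hnys : ‖ys - p‖^2 = σs^2*‖z₀‖^2 := by
        rw [hyps, norm_smul, Real.norm_eq_abs, mul_pow, sq_abs]
      have hEq : ∀ (xi : Pl) (ei ri : ℝ), ⟪z₀, xi - p⟫ = c + ei*ri →
          2*⟪ys - p, xi - p⟫ - 2*(σs*ei)*ri = ‖ys - p‖^2 - σs^2 := by
        intro xi ei ri hA
        rw [hnys, hkval, hyps, real_inner_smul_left, hA]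
        linear_combination (-σs)*hσsk
      have hss2 : ss^2 = σs^2 := by rw [hss, sq_abs]
      refine ⟨(ys, ss), ⟨hsspos, δs, hδsm, ?_, ?_, ?_⟩, ?_⟩
      · exact (circle_sq_iff ys x₁ p ss r₁ σs 1 δs hv₁ hss2
          (by rw [hσδ]; ring) (pm_sq _ hδsm)).mpr (hEq x₁ 1 r₁ hA1)
      · have := (circle_sq_iff ys x₂ p ss r₂ σs e₂ (δs*e₂) hv₂ hss2
          (by rw [hσδ]; ring) (pm_sq _ (pm_mul δs e₂ hδsm he₂))).mpr (hEq x₂ e₂ r₂ hA2)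
        rw [show (ss - δs*e₂*r₂) = (ss - (δs*e₂)*r₂) from by ring]
        exact this
      · have := (circle_sq_iff ys x₃ p ss r₃ σs e₃ (δs*e₃) hv₃ hss2
          (by rw [hσδ]; ring) (pm_sq _ (pm_mul δs e₃ hδsm he₃))).mpr (hEq x₃ e₃ r₃ hA3)
        rw [show (ss - δs*e₃*r₃) = (ss - (δs*e₃)*r₃) from by ring]
        exact this
      · rintro ⟨y, s⟩ ⟨hs, hsigned⟩
        obtain ⟨σ, hσne, hyp, hσk, habsσ⟩ := hcirc (y, s) hs hsigned
        have hyp' : y - p = σ • z₀ := hyp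
        have habsσ' : |σ| = s := habsσ
        have hσeq : σ = σs := by
          rw [hσs, eq_div_iff hkne]; exact hσk
        have hy : y = ys := by
          rw [hys, ← hσeq, ← hyp']; abel
        have hseq : s = ss := by rw [← habsσ', hσeq, hss]
        rw [Prod.mk.injEq]
        exact ⟨hy, hseq⟩
    · intro L hL
      obtain ⟨hz₀1, -⟩ := hline L hL
      exact hkne (by rw [hk, hz₀1]; norm_num)

-- ============ new material ============

lemma circle_to_signed (x₁ x₂ x₃ : Pl) (r₁ r₂ r₃ : ℝ) (β γ : Bool) (a : Pl × ℝ)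
    (ht1 : CircleTangent a.1 a.2 x₁ r₁) (ht2 : CircleTangent a.1 a.2 x₂ r₂)
    (ht3 : CircleTangent a.1 a.2 x₃ r₃)
    (hcls : clsA x₁ x₂ x₃ r₁ r₂ r₃ a = (β, γ)) :
    CircleSigned x₁ x₂ x₃ r₁ r₂ r₃ (sgB β) (sgB γ) a := by
  unfold clsA at hcls
  rw [Prod.mk.injEq] at hcls
  have h2 := (decide_sg _ _ (dC_mem a.1 x₁ a.2 r₁) (dC_mem a.1 x₂ a.2 r₂) β).mp hcls.1
  have h3 := (decide_sg _ _ (dC_mem a.1 x₁ a.2 r₁) (dC_mem a.1 x₃ a.2 r₃) γ).mp hcls.2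
  refine ⟨dC a.1 a.2 x₁ r₁, dC_mem a.1 x₁ a.2 r₁, dC_sq a.1 x₁ a.2 r₁ ht1, ?_, ?_⟩
  · have hq := dC_sq a.1 x₂ a.2 r₂ ht2
    rw [h2] at hq
    exact hq
  · have hq := dC_sq a.1 x₃ a.2 r₃ ht3
    rw [h3] at hq
    exact hq

lemma signed_to_circle (x₁ x₂ x₃ : Pl) (r₁ r₂ r₃ : ℝ)
    (h₁ : 0 < r₁) (h₂ : 0 < r₂) (h₃ : 0 < r₃) (β γ : Bool) (a : Pl × ℝ)
    (hs : 0 < a.2) (hsig : CircleSigned x₁ x₂ x₃ r₁ r₂ r₃ (sgB β) (sgB γ) a) :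
    (CircleTangent a.1 a.2 x₁ r₁ ∧ CircleTangent a.1 a.2 x₂ r₂ ∧
      CircleTangent a.1 a.2 x₃ r₃) ∧ clsA x₁ x₂ x₃ r₁ r₂ r₃ a = (β, γ) := by
  obtain ⟨δ, hδ, hsq1, hsq2, hsq3⟩ := hsig
  have hm2 : δ * sgB β = 1 ∨ δ * sgB β = -1 := pm_mul δ (sgB β) hδ (sgB_mem β)
  have hm3 : δ * sgB γ = 1 ∨ δ * sgB γ = -1 := pm_mul δ (sgB γ) hδ (sgB_mem γ)
  refine ⟨⟨tangent_of_sq _ _ _ _ δ h₁.le hs.le hδ hsq1,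
    tangent_of_sq _ _ _ _ (δ * sgB β) h₂.le hs.le hm2 hsq2,
    tangent_of_sq _ _ _ _ (δ * sgB γ) h₃.le hs.le hm3 hsq3⟩, ?_⟩
  unfold clsA
  rw [Prod.mk.injEq]
  have hd1 : dC a.1 a.2 x₁ r₁ = δ := dC_eq a.1 x₁ a.2 r₁ δ hs h₁ hδ hsq1
  have hd2 : dC a.1 a.2 x₂ r₂ = δ * sgB β := dC_eq a.1 x₂ a.2 r₂ _ hs h₂ hm2 hsq2
  have hd3 : dC a.1 a.2 x₃ r₃ = δ * sgB γ := dC_eq a.1 x₃ a.2 r₃ _ hs h₃ hm3 hsq3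
  rw [hd1, hd2, hd3]
  exact ⟨(decide_sg δ _ hδ hm2 β).mpr rfl, (decide_sg δ _ hδ hm3 γ).mpr rfl⟩

lemma line_to_signed (x₁ x₂ x₃ : Pl) (r₁ r₂ r₃ : ℝ)
    (h₁ : 0 < r₁) (h₂ : 0 < r₂) (h₃ : 0 < r₃) (β γ : Bool) (L : AffineSubspace ℝ Pl)
    (hrank : Module.finrank ℝ L.direction = 1)
    (ht1 : LineTangent L x₁ r₁) (ht2 : LineTangent L x₂ r₂) (ht3 : LineTangent L x₃ r₃)
    (hcls : clsB x₁ x₂ x₃ r₁ r₂ r₃ L = (β, γ)) :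
    LineSigned x₁ x₂ x₃ r₁ r₂ r₃ (sgB β) (sgB γ) L := by
  have ht1' := ht1
  obtain ⟨q₁, ⟨hq₁L, -⟩, -⟩ := ht1'
  obtain ⟨hu0, hchar0⟩ := lineUD_spec L (line_char_exists L hrank q₁ hq₁L)
  have hsq1 := (line_tangent_iff L _ _ hu0 hchar0 x₁ r₁ h₁).mp ht1
  have hsq2 := (line_tangent_iff L _ _ hu0 hchar0 x₂ r₂ h₂).mp ht2
  have hsq3 := (line_tangent_iff L _ _ hu0 hchar0 x₃ r₃ h₃).mp ht3
  have hv1 := if_sign _ _ h₁ hsq1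
  have hv2 := if_sign _ _ h₂ hsq2
  have hv3 := if_sign _ _ h₃ hsq3
  unfold clsB at hcls
  rw [Prod.mk.injEq] at hcls
  have h2 := (decide_sg _ _ (if_mem _) (if_mem _) β).mp hcls.1
  have h3 := (decide_sg _ _ (if_mem _) (if_mem _) γ).mp hcls.2
  refine ⟨(lineUD L).1, (lineUD L).2,
    (if ⟪(lineUD L).1, x₁⟫ - (lineUD L).2 = r₁ then (1:ℝ) else -1), if_mem _, hu0, hchar0,
    hv1, ?_, ?_⟩
  · rw [← h2]; exact hv2
  · rw [← h3]; exact hv3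

lemma signed_to_line (x₁ x₂ x₃ : Pl) (r₁ r₂ r₃ : ℝ)
    (h₁ : 0 < r₁) (h₂ : 0 < r₂) (h₃ : 0 < r₃) (β γ : Bool) (L : AffineSubspace ℝ Pl)
    (hsig : LineSigned x₁ x₂ x₃ r₁ r₂ r₃ (sgB β) (sgB γ) L) :
    Module.finrank ℝ L.direction = 1 ∧
    (LineTangent L x₁ r₁ ∧ LineTangent L x₂ r₂ ∧ LineTangent L x₃ r₃) ∧
    clsB x₁ x₂ x₃ r₁ r₂ r₃ L = (β, γ) := by
  obtain ⟨u, d, δ, hδ, hu1, hchar, hL1, hL2, hL3⟩ := hsig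
  have hune : u ≠ 0 := by intro h; rw [h] at hu1; simp at hu1
  have hself : ⟪u,u⟫ = 1 := by rw [real_inner_self_eq_norm_sq, hu1]; norm_num
  have hLeq : L = AffineSubspace.mk' (d • u) ((Submodule.span ℝ {u})ᗮ) := by
    apply SetLike.ext
    intro q
    have hd : ⟪u, d • u⟫ = d := by rw [real_inner_smul_right, hself, mul_one]
    rw [hchar q, mk'_char u (d • u) q, hd]
  have hrank : Module.finrank ℝ L.direction = 1 := by
    rw [hLeq]; exact mk'_finrank u hune (d • u)
  have htan : LineTangent L x₁ r₁ ∧ LineTangent L x₂ r₂ ∧ LineTangent L x₃ r₃ := by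
    refine ⟨(line_tangent_iff L u d hu1 hchar x₁ r₁ h₁).mpr ?_,
      (line_tangent_iff L u d hu1 hchar x₂ r₂ h₂).mpr ?_,
      (line_tangent_iff L u d hu1 hchar x₃ r₃ h₃).mpr ?_⟩
    · rw [hL1]; linear_combination (r₁^2) * pm_sq δ hδ
    · rw [hL2]; linear_combination (r₂^2) * pm_sq _ (pm_mul δ (sgB β) hδ (sgB_mem β))
    · rw [hL3]; linear_combination (r₃^2) * pm_sq _ (pm_mul δ (sgB γ) hδ (sgB_mem γ))
  refine ⟨hrank, htan, ?_⟩
  obtain ⟨hu0, hchar0⟩ := lineUD_spec L ⟨u, d, hu1, hchar⟩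
  obtain ⟨δ0, hδ0, hk1, hk2, hk3⟩ : ∃ δ0 : ℝ, (δ0 = 1 ∨ δ0 = -1) ∧
      ⟪(lineUD L).1, x₁⟫ - (lineUD L).2 = δ0*r₁ ∧
      ⟪(lineUD L).1, x₂⟫ - (lineUD L).2 = δ0*sgB β*r₂ ∧
      ⟪(lineUD L).1, x₃⟫ - (lineUD L).2 = δ0*sgB γ*r₃ := by
    rcases char_unique L u d (lineUD L).1 (lineUD L).2 hu1 hu0 hchar hchar0 with
      ⟨hu', hd'⟩ | ⟨hu', hd'⟩
    · exact ⟨δ, hδ, by simp only [hu', hd']; exact hL1, by simp only [hu', hd']; exact hL2,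
        by simp only [hu', hd']; exact hL3⟩
    · refine ⟨-δ, pm_neg δ hδ, ?_, ?_, ?_⟩
      · rw [hu', hd', inner_neg_left]; linear_combination (-1) * hL1
      · rw [hu', hd', inner_neg_left]; linear_combination (-1) * hL2
      · rw [hu', hd', inner_neg_left]; linear_combination (-1) * hL3
  have hif1 : (if ⟪(lineUD L).1, x₁⟫ - (lineUD L).2 = r₁ then (1:ℝ) else -1) = δ0 :=
    sign_if _ _ _ h₁ hδ0 hk1
  have hif2 : (if ⟪(lineUD L).1, x₂⟫ - (lineUD L).2 = r₂ then (1:ℝ) else -1)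
      = δ0 * sgB β :=
    sign_if _ _ _ h₂ (pm_mul δ0 (sgB β) hδ0 (sgB_mem β)) hk2
  have hif3 : (if ⟪(lineUD L).1, x₃⟫ - (lineUD L).2 = r₃ then (1:ℝ) else -1)
      = δ0 * sgB γ :=
    sign_if _ _ _ h₃ (pm_mul δ0 (sgB γ) hδ0 (sgB_mem γ)) hk3
  unfold clsB
  rw [Prod.mk.injEq, hif1, hif2, hif3]
  exact ⟨(decide_sg δ0 _ hδ0 (pm_mul δ0 (sgB β) hδ0 (sgB_mem β)) β).mpr rfl,
    (decide_sg δ0 _ hδ0 (pm_mul δ0 (sgB γ) hδ0 (sgB_mem γ)) γ).mpr rfl⟩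

noncomputable def Fmap (x₁ x₂ x₃ : Pl) (r₁ r₂ r₃ : ℝ) :
    ApolloniusSolutions ![x₁,x₂,x₃] ![r₁,r₂,r₃] → (Bool × Bool) ⊕ Unit
  | .inl a => .inl (clsA x₁ x₂ x₃ r₁ r₂ r₃ a.1)
  | .inr (.inl b) => .inl (clsB x₁ x₂ x₃ r₁ r₂ r₃ b.1)
  | .inr (.inr _) => .inr ()


/-- If each pair of the three circles crosses in two points and the three circles have
exactly one common point, the Apollonius problem has exactly 5 solutions. -/
theorem apollonius_common_point_five_solutions (x₁ x₂ x₃ : Pl) (r₁ r₂ r₃ : ℝ)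
    (h₁ : 0 < r₁) (h₂ : 0 < r₂) (h₃ : 0 < r₃)
    (h₁₂ : |r₁ - r₂| < ‖x₁ - x₂‖ ∧ ‖x₁ - x₂‖ < r₁ + r₂)
    (h₁₃ : |r₁ - r₃| < ‖x₁ - x₃‖ ∧ ‖x₁ - x₃‖ < r₁ + r₃)
    (h₂₃ : |r₂ - r₃| < ‖x₂ - x₃‖ ∧ ‖x₂ - x₃‖ < r₂ + r₃)
    (p : Pl) (hp : K x₁ r₁ ∩ K x₂ r₂ ∩ K x₃ r₃ = {p}) :
    Nat.card (ApolloniusSolutions ![x₁, x₂, x₃] ![r₁, r₂, r₃]) = 5 := by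
  classical
  have hpmem : p ∈ K x₁ r₁ ∩ K x₂ r₂ ∩ K x₃ r₃ := by rw [hp]; exact rfl
  have hp1 : dist p x₁ = r₁ := hpmem.1.1
  have hp2 : dist p x₂ = r₂ := hpmem.1.2
  have hp3 : dist p x₃ = r₃ := hpmem.2
  have hponly : ∀ q : Pl, dist q x₁ = r₁ → dist q x₂ = r₂ → dist q x₃ = r₃ → q = p := by
    intro q a b c
    have hq : q ∈ K x₁ r₁ ∩ K x₂ r₂ ∩ K x₃ r₃ := ⟨⟨a, b⟩, c⟩
    rw [hp] at hq
    exact hq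
  have hv₁ : ‖x₁ - p‖ = r₁ := by rw [norm_sub_rev, ← dist_eq_norm]; exact hp1
  have hv₂ : ‖x₂ - p‖ = r₂ := by rw [norm_sub_rev, ← dist_eq_norm]; exact hp2
  have hv₃ : ‖x₃ - p‖ = r₃ := by rw [norm_sub_rev, ← dist_eq_norm]; exact hp3
  have hind := centers_indep x₁ x₂ x₃ p r₁ r₂ r₃ h₁ h₂ h₃ hv₁ hv₂ hv₃ h₁₂ h₁₃ h₂₃ hponly
  have hbij : Function.Bijective (Fmap x₁ x₂ x₃ r₁ r₂ r₃) := by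
    rw [Function.bijective_iff_existsUnique]
    rintro (⟨β, γ⟩ | u)
    · rcases class_main x₁ x₂ x₃ p r₁ r₂ r₃ h₁ h₂ h₃ hv₁ hv₂ hv₃ h₁₂ h₁₃ h₂₃ hind
        (sgB β) (sgB γ) (sgB_mem β) (sgB_mem γ) with
        ⟨⟨a0, ⟨ha0s, ha0sig⟩, hauniq⟩, hnoL⟩ | ⟨hnoC, ⟨L0, hL0sig, hLuniq⟩⟩
      · obtain ⟨htans, hacls⟩ :=
          signed_to_circle x₁ x₂ x₃ r₁ r₂ r₃ h₁ h₂ h₃ β γ a0 ha0s ha0sig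
        refine ⟨Sum.inl ⟨a0, ha0s, ?_⟩, ?_, ?_⟩
        · intro i
          fin_cases i
          · exact htans.1
          · exact htans.2.1
          · exact htans.2.2
        · show Sum.inl (clsA x₁ x₂ x₃ r₁ r₂ r₃ a0) = Sum.inl (β, γ)
          rw [hacls]
        · rintro (⟨a', ha's, ha't⟩ | ⟨L', hL'r, hL't⟩ | ⟨q, hq⟩) ht'
          · have hcl : clsA x₁ x₂ x₃ r₁ r₂ r₃ a' = (β, γ) := by
              simpa [Fmap] using ht'
            have hsig' := circle_to_signed x₁ x₂ x₃ r₁ r₂ r₃ β γ a'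
              (ha't 0) (ha't 1) (ha't 2) hcl
            have heq : a' = a0 := hauniq a' ⟨ha's, hsig'⟩
            exact congrArg Sum.inl (Subtype.ext heq)
          · have hcl : clsB x₁ x₂ x₃ r₁ r₂ r₃ L' = (β, γ) := by
              simpa [Fmap] using ht'
            have hsig' := line_to_signed x₁ x₂ x₃ r₁ r₂ r₃ h₁ h₂ h₃ β γ L' hL'r
              (hL't 0) (hL't 1) (hL't 2) hcl
            exact absurd hsig' (hnoL L')
          · simp [Fmap] at ht'
      · obtain ⟨hrank0, htans0, hcls0⟩ :=
          signed_to_line x₁ x₂ x₃ r₁ r₂ r₃ h₁ h₂ h₃ β γ L0 hL0sig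
        refine ⟨Sum.inr (Sum.inl ⟨L0, hrank0, ?_⟩), ?_, ?_⟩
        · intro i
          fin_cases i
          · exact htans0.1
          · exact htans0.2.1
          · exact htans0.2.2
        · show Sum.inl (clsB x₁ x₂ x₃ r₁ r₂ r₃ L0) = Sum.inl (β, γ)
          rw [hcls0]
        · rintro (⟨a', ha's, ha't⟩ | ⟨L', hL'r, hL't⟩ | ⟨q, hq⟩) ht'
          · have hcl : clsA x₁ x₂ x₃ r₁ r₂ r₃ a' = (β, γ) := by
              simpa [Fmap] using ht'
            have hsig' := circle_to_signed x₁ x₂ x₃ r₁ r₂ r₃ β γ a'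
              (ha't 0) (ha't 1) (ha't 2) hcl
            exact absurd ⟨ha's, hsig'⟩ (hnoC a')
          · have hcl : clsB x₁ x₂ x₃ r₁ r₂ r₃ L' = (β, γ) := by
              simpa [Fmap] using ht'
            have hsig' := line_to_signed x₁ x₂ x₃ r₁ r₂ r₃ h₁ h₂ h₃ β γ L' hL'r
              (hL't 0) (hL't 1) (hL't 2) hcl
            have heq : L' = L0 := hLuniq L' hsig'
            exact congrArg (fun z => Sum.inr (Sum.inl z)) (Subtype.ext heq)
          · simp [Fmap] at ht'
    · refine ⟨Sum.inr (Sum.inr ⟨p, ?_⟩), ?_, ?_⟩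
      · intro i
        fin_cases i
        · exact hp1
        · exact hp2
        · exact hp3
      · cases u
        rfl
      · rintro (⟨a', ha's, ha't⟩ | ⟨L', hL'r, hL't⟩ | ⟨q, hq⟩) ht'
        · simp [Fmap] at ht'
        · simp [Fmap] at ht'
        · have hqp : q = p := hponly q (hq 0) (hq 1) (hq 2)
          exact congrArg (fun z => Sum.inr (Sum.inr z)) (Subtype.ext hqp)
  calc Nat.card (ApolloniusSolutions ![x₁, x₂, x₃] ![r₁, r₂, r₃])
      = Nat.card ((Bool × Bool) ⊕ Unit) := Nat.card_eq_of_bijective _ hbij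
    _ = 5 := by simp [Nat.card_eq_fintype_card]
end
end

section
/- Let C₁ = K(x₁, r₁), C₂ = K(x₂, r₂), C₃ = K(x₃, r₃) be pairwise distinct circles with rᵢ > 0 having two common points: there exist p ≠ q with p and q lying on all three circles. Then the Apollonius problem for (C₁, C₂, C₃) has exactly 2 solutions (the two common points). -/
open RealInnerProductSpace

noncomputable section

lemma pl_ext {z w : Pl} (h0 : z 0 = w 0) (h1 : z 1 = w 1) : z = w := by
  ext i; fin_cases i <;> assumption

lemma dist_sq (z x : Pl) : dist z x ^ 2 = (z 0 - x 0)^2 + (z 1 - x 1)^2 := by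
  rw [EuclideanSpace.dist_eq, Real.sq_sqrt (by positivity)]
  simp [Fin.sum_univ_two, Real.dist_eq, sq_abs]

lemma dist_sq_iff {z x : Pl} {r : ℝ} (hr : 0 ≤ r) :
    dist z x = r ↔ (z 0 - x 0)^2 + (z 1 - x 1)^2 = r^2 := by
  rw [← dist_sq]
  constructor
  · intro h; rw [h]
  · intro h; nlinarith [dist_nonneg (x := z) (y := x)]

lemma quad_three_roots {a b c t1 t2 t3 : ℝ} (h12 : t1 ≠ t2) (h13 : t1 ≠ t3) (h23 : t2 ≠ t3)
    (e1 : a*t1^2 + b*t1 + c = 0) (e2 : a*t2^2 + b*t2 + c = 0) (e3 : a*t3^2 + b*t3 + c = 0) :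
    a = 0 ∧ b = 0 ∧ c = 0 := by
  have d12 := sub_ne_zero.mpr h12
  have d13 := sub_ne_zero.mpr h13
  have d23 := sub_ne_zero.mpr h23
  have l1 : a*(t1+t2) + b = 0 := by
    have := mul_left_cancel₀ d12 (show (t1-t2) * (a*(t1+t2)+b) = (t1-t2) * 0 by
      linear_combination e1 - e2)
    exact this
  have l2 : a*(t1+t3) + b = 0 := by
    have := mul_left_cancel₀ d13 (show (t1-t3) * (a*(t1+t3)+b) = (t1-t3) * 0 by
      linear_combination e1 - e3)
    exact this
  have ha : a = 0 := by
    have := mul_left_cancel₀ d23 (show (t2-t3) * a = (t2-t3) * 0 by linear_combination l1 - l2)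
    exact this
  have hb : b = 0 := by linear_combination l1 - (t1+t2) * ha
  refine ⟨ha, hb, by linear_combination e1 - t1^2 * ha - t1 * hb⟩

lemma unique_root_disc {A B C t0 : ℝ} (hA : A ≠ 0) (h0 : A*t0^2 + B*t0 + C = 0)
    (hu : ∀ t, A*t^2 + B*t + C = 0 → t = t0) : B^2 - 4*A*C = 0 := by
  have h1 : A*(-B/A - t0)^2 + B*(-B/A - t0) + C = 0 := by
    have key : A*(-B/A - t0)^2 + B*(-B/A - t0) + C = A*t0^2 + B*t0 + C := by
      field_simp
      ring
    rw [key]; exact h0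
  have heq := hu _ h1
  have hB : B = -2*A*t0 := by
    have h2 : -B - A*t0 = A*t0 := by
      have := congrArg (fun z => A * z) heq
      have e : A * (-B/A) = -B := by field_simp
      rw [mul_sub, e] at this; linarith
    linarith
  have hC : C = A*t0^2 := by linear_combination h0 - t0*hB
  linear_combination (B - 2*A*t0)*hB - 4*A*hC


lemma center_param {p0 p1 q0 q1 c0 c1 r : ℝ}
    (hD : (q0-p0)^2 + (q1-p1)^2 ≠ 0)
    (hp : (p0-c0)^2 + (p1-c1)^2 = r^2)
    (hq : (q0-c0)^2 + (q1-c1)^2 = r^2) :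
    ∃ τ : ℝ, c0 = (p0+q0)/2 - τ*(q1-p1) ∧ c1 = (p1+q1)/2 + τ*(q0-p0) ∧
      r^2 = ((q0-p0)^2+(q1-p1)^2)/4 + τ^2*((q0-p0)^2+(q1-p1)^2) := by
  have orth : (c0 - (p0+q0)/2)*(q0-p0) + (c1 - (p1+q1)/2)*(q1-p1) = 0 := by
    linear_combination (1/2)*(hp - hq)
  obtain ⟨τ, hτ⟩ : ∃ τ : ℝ, τ =
      ((c1-(p1+q1)/2)*(q0-p0) - (c0-(p0+q0)/2)*(q1-p1))/((q0-p0)^2 + (q1-p1)^2) :=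
    ⟨_, rfl⟩
  have hc0 : c0 = (p0+q0)/2 - τ*(q1-p1) := by
    rw [hτ]; field_simp; linear_combination (2*(q0-p0))*orth
  have hc1 : c1 = (p1+q1)/2 + τ*(q0-p0) := by
    rw [hτ]; field_simp; linear_combination (2*(q1-p1))*orth
  refine ⟨τ, hc0, hc1, ?_⟩
  rw [hc0, hc1] at hp
  linear_combination -hp

lemma cross_zero_parallel {u0 u1 a0 a1 : ℝ} (hD : u0^2+u1^2 ≠ 0)
    (h : a0*u1 - a1*u0 = 0) : ∃ t : ℝ, a0 = t*u0 ∧ a1 = t*u1 := by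
  refine ⟨(a0*u0+a1*u1)/(u0^2+u1^2), ?_, ?_⟩
  · field_simp; linear_combination u1*h
  · field_simp; linear_combination (-u0)*h

lemma no_circle_core {D s βy N τ1 τ2 τ3 : ℝ} (hD : 0 < D) (hs : 0 < s)
    (h12 : τ1 ≠ τ2) (h13 : τ1 ≠ τ3) (h23 : τ2 ≠ τ3)
    (g1 : (N - D/4 - s^2 + 2*βy*τ1)^2 = 4*s^2*(D/4 + τ1^2*D))
    (g2 : (N - D/4 - s^2 + 2*βy*τ2)^2 = 4*s^2*(D/4 + τ2^2*D))
    (g3 : (N - D/4 - s^2 + 2*βy*τ3)^2 = 4*s^2*(D/4 + τ3^2*D)) : False := by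
  obtain ⟨ha, hb, hc⟩ := quad_three_roots (a := 4*βy^2 - 4*s^2*D)
    (b := 4*βy*(N - D/4 - s^2)) (c := (N - D/4 - s^2)^2 - s^2*D)
    h12 h13 h23 (by linear_combination g1) (by linear_combination g2)
    (by linear_combination g3)
  have hb' : βy * (N - D/4 - s^2) = 0 := by linarith
  have hp : 0 < s^2 * D := by positivity
  rcases mul_eq_zero.mp hb' with h | h
  · rw [h] at ha; nlinarith
  · rw [h] at hc; nlinarith

lemma no_line_core {u0 u1 v0 v1 b0 b1 τ1 τ2 τ3 : ℝ}
    (hD : 0 < u0^2 + u1^2) (hv : 0 < v0^2 + v1^2)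
    (h12 : τ1 ≠ τ2) (h13 : τ1 ≠ τ3) (h23 : τ2 ≠ τ3)
    (d1 : (v0*(b0 + τ1*u1) + v1*(b1 - τ1*u0))^2
        = (v0^2+v1^2)*((b0+τ1*u1)^2+(b1-τ1*u0)^2 - (u0^2+u1^2)/4 - τ1^2*(u0^2+u1^2)))
    (d2 : (v0*(b0 + τ2*u1) + v1*(b1 - τ2*u0))^2
        = (v0^2+v1^2)*((b0+τ2*u1)^2+(b1-τ2*u0)^2 - (u0^2+u1^2)/4 - τ2^2*(u0^2+u1^2)))
    (d3 : (v0*(b0 + τ3*u1) + v1*(b1 - τ3*u0))^2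
        = (v0^2+v1^2)*((b0+τ3*u1)^2+(b1-τ3*u0)^2 - (u0^2+u1^2)/4 - τ3^2*(u0^2+u1^2))) :
    False := by
  obtain ⟨ha, hb, hc⟩ := quad_three_roots (a := (v0*u1 - v1*u0)^2)
    (b := 2*(v0*b0+v1*b1)*(v0*u1-v1*u0) - 2*(v0^2+v1^2)*(b0*u1 - b1*u0))
    (c := (v0*b0+v1*b1)^2 - (v0^2+v1^2)*(b0^2+b1^2 - (u0^2+u1^2)/4))
    h12 h13 h23 (by linear_combination d1) (by linear_combination d2)
    (by linear_combination d3)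
  have hγ : v0*u1 - v1*u0 = 0 := pow_eq_zero_iff (n := 2) (by norm_num) |>.mp ha
  have hβ : b0*u1 - b1*u0 = 0 := by
    rw [hγ] at hb
    have h2 : (v0^2+v1^2) * (b0*u1 - b1*u0) = 0 := by linarith
    rcases mul_eq_zero.mp h2 with h | h
    · exact absurd h hv.ne'
    · exact h
  -- cross of v and b vanishes
  have key : (v0*b1 - v1*b0)^2 * (u0^2+u1^2) = 0 := by
    linear_combination ((v0*b1-v1*b0)*u0*(-v0) + (v0*b1-v1*b0)*u1*(-v1)) * hβ
      + ((v0*b1-v1*b0)*u0*b0 + (v0*b1-v1*b0)*u1*b1) * hγ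
  have hcb : v0*b1 - v1*b0 = 0 := by
    rcases mul_eq_zero.mp key with h | h
    · exact pow_eq_zero_iff (n := 2) (by norm_num) |>.mp h
    · exact absurd h hD.ne'
  have lag : (v0*b0+v1*b1)^2 = (v0^2+v1^2)*(b0^2+b1^2) := by
    linear_combination (-(v0*b1-v1*b0))*hcb
  have hfin : (v0^2+v1^2)*((u0^2+u1^2)/4) = 0 := by linear_combination hc - lag
  have := mul_pos hv (by linarith : (0:ℝ) < (u0^2+u1^2)/4)
  linarith
lemma points_core {u0 u1 a0 a1 τ1 τ2 : ℝ} (hD : 0 < u0^2+u1^2) (h12 : τ1 ≠ τ2)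
    (k1 : (a0 + τ1*u1)^2 + (a1 - τ1*u0)^2 = (u0^2+u1^2)/4 + τ1^2*(u0^2+u1^2))
    (k2 : (a0 + τ2*u1)^2 + (a1 - τ2*u0)^2 = (u0^2+u1^2)/4 + τ2^2*(u0^2+u1^2)) :
    (a0 = u0/2 ∧ a1 = u1/2) ∨ (a0 = -u0/2 ∧ a1 = -u1/2) := by
  have hβ : a0*u1 - a1*u0 = 0 := by
    have h := sub_ne_zero.mpr h12
    have := mul_left_cancel₀ h (show (τ1 - τ2) * (2*(a0*u1 - a1*u0)) = (τ1-τ2)*0 by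
      linear_combination k1 - k2)
    linarith
  have hN : a0^2 + a1^2 = (u0^2+u1^2)/4 := by linear_combination k1 - 2*τ1*hβ
  obtain ⟨t, ht0, ht1⟩ := cross_zero_parallel hD.ne' hβ
  have ht : (t - 1/2)*(t + 1/2)*(u0^2+u1^2) = 0 := by
    linear_combination hN - (t*u0 + a0)*ht0 - (t*u1 + a1)*ht1
  rcases mul_eq_zero.mp ht with h | h
  · rcases mul_eq_zero.mp h with h | h
    · left
      have : t = 1/2 := by linarith [sub_eq_zero.mp h]
      rw [this] at ht0 ht1
      constructor <;> linarith
    · right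
      have : t = -1/2 := by linarith
      rw [this] at ht0 ht1
      constructor <;> linarith
  · exact absurd h hD.ne'

lemma coords_pos {v : Pl} (hv : v ≠ 0) : 0 < (v 0)^2 + (v 1)^2 := by
  have : ¬ (v 0 = 0 ∧ v 1 = 0) := by
    rintro ⟨h0, h1⟩
    exact hv (pl_ext (z := v) (w := 0) h0 h1)
  rcases not_and_or.mp this with h | h
  · nlinarith [pow_two_pos_of_ne_zero h, sq_nonneg (v 1)]
  · nlinarith [pow_two_pos_of_ne_zero h, sq_nonneg (v 0)]

lemma line_mem_param (L : AffineSubspace ℝ Pl) (h : Module.finrank ℝ L.direction = 1) :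
    ∃ w v : Pl, v ≠ 0 ∧ ∀ z : Pl, z ∈ L ↔ ∃ t : ℝ, z = w + t • v := by
  have hbot : L ≠ ⊥ := by
    intro h'
    rw [h', AffineSubspace.direction_bot] at h
    simp at h
  obtain ⟨w, hw⟩ := (AffineSubspace.nonempty_iff_ne_bot L).mpr hbot
  have hdbot : L.direction ≠ ⊥ := by
    intro h'
    rw [h'] at h
    simp at h
  obtain ⟨v, hvL, hv0⟩ := Submodule.exists_mem_ne_zero_of_ne_bot hdbot
  have hspan : Submodule.span ℝ {v} = L.direction :=
    Submodule.eq_of_le_of_finrank_le ((Submodule.span_singleton_le_iff_mem v _).mpr hvL)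
      (by rw [h, finrank_span_singleton hv0])
  refine ⟨w, v, hv0, fun z => ?_⟩
  rw [← AffineSubspace.vsub_right_mem_direction_iff_mem hw z, ← hspan,
    Submodule.mem_span_singleton]
  constructor
  · rintro ⟨t, ht⟩
    refine ⟨t, ?_⟩
    rw [ht, vsub_eq_sub]
    abel
  · rintro ⟨t, rfl⟩
    refine ⟨t, ?_⟩
    rw [vsub_eq_sub]
    abel

lemma line_tangent_disc {L : AffineSubspace ℝ Pl} {w v : Pl} (hv : v ≠ 0)
    (hL : ∀ z : Pl, z ∈ L ↔ ∃ t : ℝ, z = w + t • v) {c : Pl} {r : ℝ} (hr : 0 ≤ r)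
    (ht : LineTangent L c r) :
    (v 0 * (w 0 - c 0) + v 1 * (w 1 - c 1))^2
      = ((v 0)^2 + (v 1)^2) * ((w 0 - c 0)^2 + (w 1 - c 1)^2 - r^2) := by
  obtain ⟨z0, ⟨hz0L, hz0K⟩, hu⟩ := ht
  have hvA : (0:ℝ) < (v 0)^2 + (v 1)^2 := coords_pos hv
  have hcoord : ∀ t : ℝ, ((w + t • v) 0 = w 0 + t * v 0) ∧ ((w + t • v) 1 = w 1 + t * v 1) :=
    fun t => ⟨rfl, rfl⟩
  have key : ∀ t : ℝ, (w + t • v ∈ (L : Set Pl) ∩ K c r) ↔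
      ((v 0)^2 + (v 1)^2)*t^2 + (2*(v 0 * (w 0 - c 0) + v 1 * (w 1 - c 1)))*t
        + ((w 0 - c 0)^2 + (w 1 - c 1)^2 - r^2) = 0 := by
    intro t
    have hmem : w + t • v ∈ L := (hL _).mpr ⟨t, rfl⟩
    have hKiff : w + t • v ∈ K c r ↔
        ((w + t • v) 0 - c 0)^2 + ((w + t • v) 1 - c 1)^2 = r^2 := dist_sq_iff hr
    rw [(hcoord t).1, (hcoord t).2] at hKiff
    constructor
    · rintro ⟨-, hk⟩
      have := hKiff.mp hk
      linear_combination this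
    · intro hq
      exact ⟨hmem, hKiff.mpr (by linear_combination hq)⟩
  obtain ⟨t0, rfl⟩ := (hL z0).mp hz0L
  have root0 := (key t0).mp ⟨hz0L, hz0K⟩
  have huniq : ∀ t : ℝ, ((v 0)^2 + (v 1)^2)*t^2 + (2*(v 0 * (w 0 - c 0) + v 1 * (w 1 - c 1)))*t
      + ((w 0 - c 0)^2 + (w 1 - c 1)^2 - r^2) = 0 → t = t0 := by
    intro t hq
    have heq := hu _ ((key t).mpr hq)
    have : t • v = t0 • v := add_left_cancel heq
    exact smul_left_injective ℝ hv this
  have hdisc := unique_root_disc hvA.ne' root0 huniq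
  linear_combination (1/4) * hdisc


set_option maxHeartbeats 1000000

/-- Three pairwise distinct circles having two common points admit exactly 2 Apollonius
solutions (the two common points). -/
theorem apollonius_two_common_points_two_solutions (x₁ x₂ x₃ : Pl) (r₁ r₂ r₃ : ℝ)
    (h₁ : 0 < r₁) (h₂ : 0 < r₂) (h₃ : 0 < r₃)
    (hne₁₂ : (x₁, r₁) ≠ (x₂, r₂)) (hne₁₃ : (x₁, r₁) ≠ (x₃, r₃))
    (hne₂₃ : (x₂, r₂) ≠ (x₃, r₃))
    (hpq : ∃ p q : Pl, p ≠ q ∧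
      p ∈ K x₁ r₁ ∩ K x₂ r₂ ∩ K x₃ r₃ ∧ q ∈ K x₁ r₁ ∩ K x₂ r₂ ∩ K x₃ r₃) :
    Nat.card (ApolloniusSolutions ![x₁, x₂, x₃] ![r₁, r₂, r₃]) = 2 := by
  obtain ⟨p, q, hpqne, ⟨⟨hp1, hp2⟩, hp3⟩, ⟨⟨hq1, hq2⟩, hq3⟩⟩ := hpq
  simp only [K, Set.mem_setOf_eq] at hp1 hp2 hp3 hq1 hq2 hq3
  have hp1' := (dist_sq_iff h₁.le).mp hp1
  have hp2' := (dist_sq_iff h₂.le).mp hp2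
  have hp3' := (dist_sq_iff h₃.le).mp hp3
  have hq1' := (dist_sq_iff h₁.le).mp hq1
  have hq2' := (dist_sq_iff h₂.le).mp hq2
  have hq3' := (dist_sq_iff h₃.le).mp hq3
  have hD : 0 < (q 0 - p 0)^2 + (q 1 - p 1)^2 := by
    have h := coords_pos (sub_ne_zero.mpr (Ne.symm hpqne))
    simpa using h
  obtain ⟨τ₁, hc10, hc11, hrr1⟩ := center_param hD.ne' hp1' hq1'
  obtain ⟨τ₂, hc20, hc21, hrr2⟩ := center_param hD.ne' hp2' hq2'
  obtain ⟨τ₃, hc30, hc31, hrr3⟩ := center_param hD.ne' hp3' hq3'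
  have rad_eq : ∀ a b : ℝ, 0 < a → 0 < b → a^2 = b^2 → a = b := by
    intro a b ha hb h2
    have h3 : (a - b) * (a + b) = 0 := by linear_combination h2
    rcases mul_eq_zero.mp h3 with h4 | h4
    · linarith
    · linarith
  have hτ12 : τ₁ ≠ τ₂ := by
    intro he
    apply hne₁₂
    have her : r₁ = r₂ := rad_eq _ _ h₁ h₂ (by rw [hrr1, hrr2, he])
    have hx : x₁ = x₂ := pl_ext (by rw [hc10, hc20, he]) (by rw [hc11, hc21, he])
    rw [hx, her]
  have hτ13 : τ₁ ≠ τ₃ := by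
    intro he
    apply hne₁₃
    have her : r₁ = r₃ := rad_eq _ _ h₁ h₃ (by rw [hrr1, hrr3, he])
    have hx : x₁ = x₃ := pl_ext (by rw [hc10, hc30, he]) (by rw [hc11, hc31, he])
    rw [hx, her]
  have hτ23 : τ₂ ≠ τ₃ := by
    intro he
    apply hne₂₃
    have her : r₂ = r₃ := rad_eq _ _ h₂ h₃ (by rw [hrr2, hrr3, he])
    have hx : x₂ = x₃ := pl_ext (by rw [hc20, hc30, he]) (by rw [hc21, hc31, he])
    rw [hx, her]
  -- no tangent circle
  have hA : IsEmpty {ys : Pl × ℝ // 0 < ys.2 ∧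
      ∀ i, CircleTangent ys.1 ys.2 (![x₁, x₂, x₃] i) (![r₁, r₂, r₃] i)} := by
    constructor
    rintro ⟨⟨y, s⟩, hs, ht⟩
    have ht1 := ht 0
    have ht2 := ht 1
    have ht3 := ht 2
    simp only [Matrix.cons_val_zero, Matrix.cons_val_one, Matrix.head_cons,
      Matrix.cons_val_two, Matrix.tail_cons] at ht1 ht2 ht3
    have g1 : ((y 0 - x₁ 0)^2 + (y 1 - x₁ 1)^2 - s^2 - r₁^2)^2 = 4*s^2*r₁^2 := by
      rcases ht1 with h | h
      · have h2 : (y 0 - x₁ 0)^2 + (y 1 - x₁ 1)^2 = (s + r₁)^2 := by rw [← dist_sq, h]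
        linear_combination ((y 0 - x₁ 0)^2 + (y 1 - x₁ 1)^2 - s^2 - r₁^2 + 2*s*r₁) * h2
      · have h2 : (y 0 - x₁ 0)^2 + (y 1 - x₁ 1)^2 = (s - r₁)^2 := by
          rw [← dist_sq, h, sq_abs]
        linear_combination ((y 0 - x₁ 0)^2 + (y 1 - x₁ 1)^2 - s^2 - r₁^2 - 2*s*r₁) * h2
    have g2 : ((y 0 - x₂ 0)^2 + (y 1 - x₂ 1)^2 - s^2 - r₂^2)^2 = 4*s^2*r₂^2 := by
      rcases ht2 with h | h
      · have h2 : (y 0 - x₂ 0)^2 + (y 1 - x₂ 1)^2 = (s + r₂)^2 := by rw [← dist_sq, h]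
        linear_combination ((y 0 - x₂ 0)^2 + (y 1 - x₂ 1)^2 - s^2 - r₂^2 + 2*s*r₂) * h2
      · have h2 : (y 0 - x₂ 0)^2 + (y 1 - x₂ 1)^2 = (s - r₂)^2 := by
          rw [← dist_sq, h, sq_abs]
        linear_combination ((y 0 - x₂ 0)^2 + (y 1 - x₂ 1)^2 - s^2 - r₂^2 - 2*s*r₂) * h2
    have g3 : ((y 0 - x₃ 0)^2 + (y 1 - x₃ 1)^2 - s^2 - r₃^2)^2 = 4*s^2*r₃^2 := by
      rcases ht3 with h | h
      · have h2 : (y 0 - x₃ 0)^2 + (y 1 - x₃ 1)^2 = (s + r₃)^2 := by rw [← dist_sq, h]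
        linear_combination ((y 0 - x₃ 0)^2 + (y 1 - x₃ 1)^2 - s^2 - r₃^2 + 2*s*r₃) * h2
      · have h2 : (y 0 - x₃ 0)^2 + (y 1 - x₃ 1)^2 = (s - r₃)^2 := by
          rw [← dist_sq, h, sq_abs]
        linear_combination ((y 0 - x₃ 0)^2 + (y 1 - x₃ 1)^2 - s^2 - r₃^2 - 2*s*r₃) * h2
    rw [hc10, hc11, hrr1] at g1
    rw [hc20, hc21, hrr2] at g2
    rw [hc30, hc31, hrr3] at g3
    exact no_circle_core (D := (q 0 - p 0)^2 + (q 1 - p 1)^2) (s := s)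
      (βy := (y 0 - (p 0 + q 0)/2)*(q 1 - p 1) - (y 1 - (p 1 + q 1)/2)*(q 0 - p 0))
      (N := (y 0 - (p 0 + q 0)/2)^2 + (y 1 - (p 1 + q 1)/2)^2)
      hD hs hτ12 hτ13 hτ23
      (by linear_combination g1) (by linear_combination g2) (by linear_combination g3)
  -- no tangent line
  have hB : IsEmpty {L : AffineSubspace ℝ Pl // Module.finrank ℝ L.direction = 1 ∧
      ∀ i, LineTangent L (![x₁, x₂, x₃] i) (![r₁, r₂, r₃] i)} := by
    constructor
    rintro ⟨L, hdim, ht⟩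
    obtain ⟨w, v, hv, hL⟩ := line_mem_param L hdim
    have ht1 := ht 0
    have ht2 := ht 1
    have ht3 := ht 2
    simp only [Matrix.cons_val_zero, Matrix.cons_val_one, Matrix.head_cons,
      Matrix.cons_val_two, Matrix.tail_cons] at ht1 ht2 ht3
    have d1 := line_tangent_disc hv hL h₁.le ht1
    have d2 := line_tangent_disc hv hL h₂.le ht2
    have d3 := line_tangent_disc hv hL h₃.le ht3
    rw [hc10, hc11, hrr1] at d1
    rw [hc20, hc21, hrr2] at d2
    rw [hc30, hc31, hrr3] at d3
    exact no_line_core (u0 := q 0 - p 0) (u1 := q 1 - p 1) (v0 := v 0) (v1 := v 1)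
      (b0 := w 0 - (p 0 + q 0)/2) (b1 := w 1 - (p 1 + q 1)/2)
      hD (coords_pos hv) hτ12 hτ13 hτ23
      (by linear_combination d1) (by linear_combination d2) (by linear_combination d3)
  -- common points are exactly p and q
  have hC : ∀ z : Pl, (∀ i, z ∈ K (![x₁, x₂, x₃] i) (![r₁, r₂, r₃] i)) ↔
      (z = p ∨ z = q) := by
    intro z
    constructor
    · intro h
      have h1 := h 0
      have h2 := h 1
      simp only [Matrix.cons_val_zero, Matrix.cons_val_one, Matrix.head_cons] at h1 h2
      simp only [K, Set.mem_setOf_eq] at h1 h2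
      have k1 := (dist_sq_iff h₁.le).mp h1
      have k2 := (dist_sq_iff h₂.le).mp h2
      rw [hc10, hc11, hrr1] at k1
      rw [hc20, hc21, hrr2] at k2
      have hpc := points_core (u0 := q 0 - p 0) (u1 := q 1 - p 1)
        (a0 := z 0 - (p 0 + q 0)/2) (a1 := z 1 - (p 1 + q 1)/2) hD hτ12
        (by linear_combination k1) (by linear_combination k2)
      rcases hpc with ⟨e0, e1⟩ | ⟨e0, e1⟩
      · right; exact pl_ext (by linarith) (by linarith)
      · left; exact pl_ext (by linarith) (by linarith)
    · rintro (rfl | rfl) <;> intro i <;> fin_cases i <;>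
        simp only [Matrix.cons_val_zero, Matrix.cons_val_one, Matrix.head_cons,
          Matrix.cons_val_two, Matrix.tail_cons, Fin.mk_one, Fin.mk_zero] <;>
        first
        | exact hp1 | exact hp2 | exact hp3 | exact hq1 | exact hq2 | exact hq3
  unfold ApolloniusSolutions
  haveI := hA
  haveI := hB
  rw [Nat.card_congr ((Equiv.emptySum _ _).trans ((Equiv.emptySum _ _).trans
    (Equiv.subtypeEquivRight hC)))]
  rw [Nat.card_congr (Equiv.subtypeEquivRight (q := fun z => z ∈ ({p, q} : Set Pl))
    (fun z => by simp))]
  rw [Nat.card_coe_set_eq, Set.ncard_pair hpqne]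
end
end
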